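/- arXiv:2101.04292 — 3 statements merged into one kernel-verified Lean document; each statement's English description precedes it below -/
import Mathlib

section
/- Let (X_i)_{i≥0} ⊂ 𝕆^{n×k} be a sequence generated by the SCF iteration: for each i ≥ 1 there exist X̂_i ∈ 𝕆^{n×k} that is an orthonormal basis matrix of the invariant subspace of E(X_{i−1}) associated with its k largest eigenvalues (i.e. E(X_{i−1})·X̂_i = X̂_i·(X̂_iᵀE(X_{i−1})X̂_i) and tr(X̂_iᵀE(X_{i−1})X̂_i) = λ₁(E(X_{i−1})) + ⋯ + λ_k(E(X_{i−1}))) and a singular value decomposition X̂_iᵀD = U_iΣ_iV_iᵀ such that X_i = X̂_iU_iV_iᵀ; assume moreover tr(X₀ᵀAX₀ + X₀ᵀD) ≥ 0 in case 0 < θ < 1. Suppose a subsequence (X_i)_{i∈ℐ} converges to X_* ∈ 𝕆^{n×k} and that λ_k(E(X_*)) − λ_{k+1}(E(X_*)) > 0. Then X_* satisfies the KKT condition: E(X_*)·X_* = X_*·(X_*ᵀE(X_*)X_*) and X_*ᵀD is symmetric; moreover X_*ᵀD is positive semidefinite and X_* is an orthonormal basis matrix of the invariant subspace of E(X_*) associated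 with its k largest eigenvalues. -/
open Matrix Filter

noncomputable section

/-- `f₁(X) = tr(XᵀAX + XᵀD) / tr(XᵀBX)`. -/
def f1 {n k : ℕ} (A B : Matrix (Fin n) (Fin n) ℝ) (D : Matrix (Fin n) (Fin k) ℝ)
    (X : Matrix (Fin n) (Fin k) ℝ) : ℝ :=
  (trace (Xᵀ * A * X) + trace (Xᵀ * D)) / trace (Xᵀ * B * X)

/-- `E(X) = (2/(tr(XᵀBX))^θ) · [A + (DXᵀ + XDᵀ)/2 − θ f₁(X) B]`. -/
def Emat {n k : ℕ} (A B : Matrix (Fin n) (Fin n) ℝ) (D : Matrix (Fin n) (Fin k) ℝ)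
    (θ : ℝ) (X : Matrix (Fin n) (Fin k) ℝ) : Matrix (Fin n) (Fin n) ℝ :=
  (2 / trace (Xᵀ * B * X) ^ θ) •
    (A + (2⁻¹ : ℝ) • (D * Xᵀ + X * Dᵀ) - (θ * f1 A B D X) • B)



lemma realCT {m l : ℕ} (M : Matrix (Fin m) (Fin l) ℝ) : Mᴴ = Mᵀ := by
  ext i j; simp [Matrix.conjTranspose_apply]

lemma trace_XtMX_sum {n k : ℕ} (M : Matrix (Fin n) (Fin n) ℝ) (X : Matrix (Fin n) (Fin k) ℝ) :
    trace (Xᵀ * M * X) = ∑ j : Fin k, ∑ i : Fin n, ∑ l : Fin n, X i j * M i l * X l j := by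
  simp [Matrix.trace, Matrix.diag, Matrix.mul_apply, Matrix.transpose_apply, Finset.mul_sum,
    Finset.sum_mul]
  exact Finset.sum_congr rfl fun j _ => Finset.sum_comm


lemma trace_XtX_nonneg {n k : ℕ} (X : Matrix (Fin n) (Fin k) ℝ) : 0 ≤ trace (Xᵀ * X) := by
  have : trace (Xᵀ * X) = ∑ j : Fin k, ∑ i : Fin n, X i j ^ 2 := by
    simp [Matrix.trace, Matrix.diag, Matrix.mul_apply, Matrix.transpose_apply, sq]
  rw [this]
  positivity

lemma trace_XtX_eq_zero {n k : ℕ} (X : Matrix (Fin n) (Fin k) ℝ) (h : trace (Xᵀ * X) = 0) :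
    X = 0 := by
  have e : trace (Xᵀ * X) = ∑ j : Fin k, ∑ i : Fin n, X i j ^ 2 := by
    simp [Matrix.trace, Matrix.diag, Matrix.mul_apply, Matrix.transpose_apply, sq]
  rw [e] at h
  ext i j
  have h1 := (Finset.sum_eq_zero_iff_of_nonneg (by intro a _; positivity)).1 h j (Finset.mem_univ _)
  have h2 := (Finset.sum_eq_zero_iff_of_nonneg (by intro a _; positivity)).1 h1 i (Finset.mem_univ _)
  simpa using pow_eq_zero_iff (n := 2) (by norm_num) |>.1 h2

lemma trace_B_pos {n k : ℕ} (hkn : k < n) (B : Matrix (Fin n) (Fin n) ℝ) (hB : B.PosSemidef)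
    (hrank : n - k < B.rank) (X : Matrix (Fin n) (Fin k) ℝ) (hX : Xᵀ * X = 1) :
    0 < trace (Xᵀ * B * X) := by
  obtain ⟨C, hC⟩ : ∃ C : Matrix (Fin n) (Fin n) ℝ, B = Cᴴ * C := by
    open scoped MatrixOrder in
    obtain ⟨C, hC⟩ := CStarAlgebra.nonneg_iff_eq_star_mul_self.mp hB.nonneg
    exact ⟨C, hC⟩
  rw [realCT] at hC
  have key : Xᵀ * B * X = (C * X)ᵀ * (C * X) := by
    rw [hC]; simp [Matrix.transpose_mul, Matrix.mul_assoc]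
  rw [key]
  rcases lt_or_eq_of_le (trace_XtX_nonneg (C * X)) with h | h
  · exact h
  · exfalso
    have hCX : C * X = 0 := trace_XtX_eq_zero _ h.symm
    have hBX : B * X = 0 := by rw [hC, Matrix.mul_assoc, hCX, Matrix.mul_zero]
    -- rank argument
    have hrange : LinearMap.range X.mulVecLin ≤ LinearMap.ker B.mulVecLin := by
      rintro v ⟨w, rfl⟩
      have : (B * X).mulVecLin w = 0 := by rw [hBX]; simp
      rw [Matrix.mulVecLin_mul] at this
      exact this
    have hXrank : X.rank = k := by
      have := Matrix.rank_transpose_mul_self X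
      rw [hX] at this
      simpa [Matrix.rank_one] using this.symm
    have h1 : k ≤ Module.finrank ℝ (LinearMap.ker B.mulVecLin) := by
      calc k = X.rank := hXrank.symm
        _ = Module.finrank ℝ (LinearMap.range X.mulVecLin) := rfl
        _ ≤ _ := Submodule.finrank_mono hrange
    have h2 : B.rank + Module.finrank ℝ (LinearMap.ker B.mulVecLin) = n := by
      have := LinearMap.finrank_range_add_finrank_ker B.mulVecLin
      simpa [Matrix.rank] using this
    omega


section KyFan
variable {n k : ℕ}

lemma sum_filter_lt (hkn : k ≤ n) (f : Fin n → ℝ) :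
    ∑ i ∈ Finset.univ.filter (fun i : Fin n => i.val < k), f i
      = ∑ j : Fin k, f (Fin.castLE hkn j) := by
  refine Finset.sum_bij' (i := fun (i : Fin n) (hi : i ∈ _) => (⟨i.val, by
        simpa using (Finset.mem_filter.1 hi).2⟩ : Fin k))
    (j := fun (j : Fin k) (_ : j ∈ Finset.univ) => Fin.castLE hkn j) ?_ ?_ ?_ ?_ ?_
  · intro a ha; exact Finset.mem_univ _
  · intro b hb; simp [Fin.castLE, b.isLt]
  · intro a ha; rfl
  · intro b hb; rfl
  · intro a ha; rfl

end KyFan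

section KyFan2
variable {n k : ℕ}

lemma kyfan_aux (hk : 1 ≤ k) (hkn : k < n) (μ : Fin n → ℝ) (hμ : Antitone μ)
    (s : Fin n → ℝ) (h0 : ∀ i, 0 ≤ s i) (h1 : ∀ i, s i ≤ 1) (hsum : ∑ i, s i = k) :
    ∑ i, μ i * s i
      + (μ ⟨k - 1, by omega⟩ - μ ⟨k, hkn⟩)
          * ∑ i ∈ Finset.univ.filter (fun i : Fin n => k ≤ i.val), s i
      ≤ ∑ j : Fin k, μ (Fin.castLE hkn.le j) := by
  classical
  set S := Finset.univ.filter (fun i : Fin n => i.val < k) with hS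
  set T := Finset.univ.filter (fun i : Fin n => k ≤ i.val) with hT
  have hTS : T = Finset.univ.filter (fun i : Fin n => ¬ i.val < k) := by
    simp [hT, not_lt]
  have hsplit : ∀ f : Fin n → ℝ, ∑ i ∈ S, f i + ∑ i ∈ T, f i = ∑ i, f i := by
    intro f; rw [hTS, hS]; exact Finset.sum_filter_add_sum_filter_not _ _ _
  have hcardS : (S.card : ℝ) = k := by
    have h := sum_filter_lt hkn.le (fun _ => (1 : ℝ))
    simpa using h
  set c := μ ⟨k - 1, by omega⟩ with hc
  set d := μ ⟨k, hkn⟩ with hd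
  have hcd : d ≤ c := hμ (by rw [Fin.le_def]; show k - 1 ≤ k; omega)
  have hSbound : ∑ i ∈ S, μ i * s i ≤ ∑ i ∈ S, (μ i - c * (1 - s i)) := by
    refine Finset.sum_le_sum ?_
    intro i hi
    have hik : i.val < k := by simpa [hS] using hi
    have hci : c ≤ μ i := hμ (by rw [Fin.le_def]; show i.val ≤ k - 1; omega)
    nlinarith [h1 i, h0 i]
  have hTbound : ∑ i ∈ T, μ i * s i ≤ ∑ i ∈ T, d * s i := by
    refine Finset.sum_le_sum ?_
    intro i hi
    have hik : k ≤ i.val := by simpa [hT] using hi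
    have hdi : μ i ≤ d := hμ (by rw [Fin.le_def]; show k ≤ i.val; omega)
    nlinarith [h0 i]
  have hSsum : ∑ i ∈ S, s i + ∑ i ∈ T, s i = k := by rw [hsplit]; exact hsum
  have hμsplit := hsplit (fun i => μ i * s i)
  have htarget : ∑ j : Fin k, μ (Fin.castLE hkn.le j) = ∑ i ∈ S, μ i :=
    (sum_filter_lt hkn.le μ).symm
  have expand : ∑ i ∈ S, (μ i - c * (1 - s i))
      = ∑ i ∈ S, μ i - c * (S.card - ∑ i ∈ S, s i) := by
    rw [Finset.sum_sub_distrib, ← Finset.mul_sum]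
    congr 1
    rw [Finset.sum_sub_distrib]
    simp [mul_sub]
  rw [htarget, ← hμsplit]
  have hTd : ∑ i ∈ T, d * s i = d * ∑ i ∈ T, s i := by rw [Finset.mul_sum]
  have e2 : ((S.card : ℝ) - ∑ i ∈ S, s i) = ∑ i ∈ T, s i := by
    rw [hcardS]; linarith [hSsum]
  rw [e2] at expand
  nlinarith [hSbound, hTbound, hSsum, expand, hTd]

end KyFan2

section KyFan3
variable {n k : ℕ}

lemma row_sq_nonneg (Z : Matrix (Fin n) (Fin k) ℝ) (i : Fin n) : 0 ≤ ∑ j, Z i j ^ 2 := by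
  positivity

lemma row_sq_eq_P (Z : Matrix (Fin n) (Fin k) ℝ) (i : Fin n) :
    ∑ j, Z i j ^ 2 = (Z * Zᵀ) i i := by
  simp [Matrix.mul_apply, Matrix.transpose_apply, sq]

lemma row_sq_le_one (Z : Matrix (Fin n) (Fin k) ℝ) (hZ : Zᵀ * Z = 1) (i : Fin n) :
    ∑ j, Z i j ^ 2 ≤ 1 := by
  set P := Z * Zᵀ with hP
  have hPP : P * P = P := by
    rw [hP, Matrix.mul_assoc, ← Matrix.mul_assoc Zᵀ, hZ, Matrix.one_mul]
  have hPsym : ∀ a b, P a b = P b a := by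
    intro a b
    simp [hP, Matrix.mul_apply, Matrix.transpose_apply, mul_comm]
  have hquad : P i i = ∑ l, (P i l) ^ 2 := by
    conv_lhs => rw [← hPP]
    simp [Matrix.mul_apply, sq]
    exact Finset.sum_congr rfl fun l _ => by rw [hPsym l i]
  have hself : (P i i) ^ 2 ≤ ∑ l, (P i l) ^ 2 :=
    Finset.single_le_sum (f := fun l => (P i l) ^ 2) (fun l _ => sq_nonneg _) (Finset.mem_univ i)
  have h2 : (P i i) ^ 2 ≤ P i i := by nth_rewrite 2 [hquad]; exact hself
  rw [row_sq_eq_P Z i, ← hP]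
  nlinarith [h2]

lemma row_sq_sum (Z : Matrix (Fin n) (Fin k) ℝ) (hZ : Zᵀ * Z = 1) :
    ∑ i, ∑ j, Z i j ^ 2 = k := by
  have : ∑ i, ∑ j, Z i j ^ 2 = trace (Z * Zᵀ) := by
    simp [Matrix.trace, Matrix.diag]
    exact Finset.sum_congr rfl fun i _ => row_sq_eq_P Z i
  rw [this, Matrix.trace_mul_comm, hZ]
  simp [Matrix.trace]

lemma trace_quad (μ : Fin n → ℝ) (Z : Matrix (Fin n) (Fin k) ℝ) :
    trace (Zᵀ * Matrix.diagonal μ * Z) = ∑ i, μ i * ∑ j, Z i j ^ 2 := by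
  rw [Matrix.mul_assoc]
  have h1 : ∀ (i : Fin n) (j : Fin k), (Matrix.diagonal μ * Z) i j = μ i * Z i j := fun i j => by
    rw [Matrix.diagonal_mul]
  simp only [Matrix.trace, Matrix.diag, Matrix.mul_apply, Matrix.transpose_apply, h1]
  rw [Finset.sum_comm]
  refine Finset.sum_congr rfl fun i _ => ?_
  rw [Finset.mul_sum]
  refine Finset.sum_congr rfl fun j _ => ?_
  ring

lemma conj_form {n k : ℕ} (Q M : Matrix (Fin n) (Fin n) ℝ) (Y : Matrix (Fin n) (Fin k) ℝ) :
    Yᵀ * (Q * M * Qᵀ) * Y = (Qᵀ * Y)ᵀ * M * (Qᵀ * Y) := by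
  rw [Matrix.transpose_mul, Matrix.transpose_transpose]
  simp only [Matrix.mul_assoc]

lemma kyfan_matrix (hk : 1 ≤ k) (hkn : k < n) (μ : Fin n → ℝ) (hμ : Antitone μ)
    (Q : Matrix (Fin n) (Fin n) ℝ) (hQ : Qᵀ * Q = 1)
    (Y : Matrix (Fin n) (Fin k) ℝ) (hY : Yᵀ * Y = 1) :
    trace (Yᵀ * (Q * Matrix.diagonal μ * Qᵀ) * Y)
      + (μ ⟨k - 1, by omega⟩ - μ ⟨k, hkn⟩)
          * ∑ i ∈ Finset.univ.filter (fun i : Fin n => k ≤ i.val),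
              (∑ j, (Qᵀ * Y) i j ^ 2)
      ≤ ∑ j : Fin k, μ (Fin.castLE hkn.le j) := by
  set Z := Qᵀ * Y with hZdef
  have hQQ : Q * Qᵀ = 1 := mul_eq_one_comm.1 hQ
  have hZ : Zᵀ * Z = 1 := by
    rw [hZdef, Matrix.transpose_mul, Matrix.transpose_transpose, Matrix.mul_assoc,
      ← Matrix.mul_assoc Q, hQQ, Matrix.one_mul, hY]
  have e1 : trace (Yᵀ * (Q * Matrix.diagonal μ * Qᵀ) * Y)
      = ∑ i, μ i * ∑ j, Z i j ^ 2 := by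
    rw [conj_form, ← hZdef, trace_quad]
  rw [e1]
  exact kyfan_aux hk hkn μ hμ (fun i => ∑ j, Z i j ^ 2)
    (row_sq_nonneg Z) (row_sq_le_one Z hZ) (row_sq_sum Z hZ)

lemma kyfan_ineq (hk : 1 ≤ k) (hkn : k < n) (μ : Fin n → ℝ) (hμ : Antitone μ)
    (Q : Matrix (Fin n) (Fin n) ℝ) (hQ : Qᵀ * Q = 1)
    (Y : Matrix (Fin n) (Fin k) ℝ) (hY : Yᵀ * Y = 1) :
    trace (Yᵀ * (Q * Matrix.diagonal μ * Qᵀ) * Y) ≤ ∑ j : Fin k, μ (Fin.castLE hkn.le j) := by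
  have h := kyfan_matrix hk hkn μ hμ Q hQ Y hY
  have hgapnn : 0 ≤ μ ⟨k - 1, by omega⟩ - μ ⟨k, hkn⟩ := by
    have := hμ (show (⟨k - 1, by omega⟩ : Fin n) ≤ ⟨k, hkn⟩ by
      rw [Fin.le_def]; show k - 1 ≤ k; omega)
    linarith
  have hsnn : 0 ≤ ∑ i ∈ Finset.univ.filter (fun i : Fin n => k ≤ i.val),
      (∑ j, (Qᵀ * Y) i j ^ 2) := Finset.sum_nonneg fun i _ => row_sq_nonneg _ i
  nlinarith [h, mul_nonneg hgapnn hsnn]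

end KyFan3


variable {n k : ℕ}

lemma col_sq_one (X : Matrix (Fin n) (Fin k) ℝ) (hX : Xᵀ * X = 1) (j : Fin k) :
    ∑ i, X i j ^ 2 = 1 := by
  have h := congrFun (congrFun hX j) j
  simpa [Matrix.mul_apply, Matrix.transpose_apply, Matrix.one_apply, sq] using h

lemma csdiag (P Q : Matrix (Fin n) (Fin k) ℝ) (hP : Pᵀ * P = 1) (hQ : Qᵀ * Q = 1)
    (σ : Fin k → ℝ) (hσ : ∀ j, 0 ≤ σ j) :
    trace (Pᵀ * Q * Matrix.diagonal σ) ≤ ∑ j, σ j := by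
  have e : trace (Pᵀ * Q * Matrix.diagonal σ) = ∑ j, (Pᵀ * Q) j j * σ j := by
    simp [Matrix.trace, Matrix.diag, Matrix.mul_diagonal]
  rw [e]
  refine Finset.sum_le_sum fun j _ => ?_
  have hdiag : (Pᵀ * Q) j j = ∑ i, P i j * Q i j := by
    simp [Matrix.mul_apply, Matrix.transpose_apply]
  have hcs : ((Pᵀ * Q) j j) ^ 2 ≤ 1 := by
    rw [hdiag]
    calc (∑ i, P i j * Q i j) ^ 2 ≤ (∑ i, P i j ^ 2) * ∑ i, Q i j ^ 2 :=
          Finset.sum_mul_sq_le_sq_mul_sq _ _ _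
      _ = 1 := by rw [col_sq_one P hP j, col_sq_one Q hQ j, one_mul]
  have h1 : (Pᵀ * Q) j j ≤ 1 := by nlinarith
  nlinarith [hσ j, h1]

lemma orth_conj_trace (M : Matrix (Fin n) (Fin n) ℝ) (H : Matrix (Fin n) (Fin k) ℝ)
    (U V : Matrix (Fin k) (Fin k) ℝ) (hU : Uᵀ * U = 1) (hV : Vᵀ * V = 1) :
    trace ((H * U * Vᵀ)ᵀ * M * (H * U * Vᵀ)) = trace (Hᵀ * M * H) := by
  have hUU : U * Uᵀ = 1 := mul_eq_one_comm.1 hU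
  have e : (H * U * Vᵀ)ᵀ * M * (H * U * Vᵀ) = V * (Uᵀ * (Hᵀ * M * H) * U) * Vᵀ := by
    simp [Matrix.transpose_mul, Matrix.mul_assoc]
  rw [e, Matrix.trace_mul_cycle V _ Vᵀ]
  rw [show Vᵀ * V * (Uᵀ * (Hᵀ * M * H) * U) = Uᵀ * (Hᵀ * M * H) * U by rw [hV, Matrix.one_mul]]
  rw [Matrix.trace_mul_cycle Uᵀ _ U]
  rw [show U * Uᵀ * (Hᵀ * M * H) = Hᵀ * M * H by rw [hUU, Matrix.one_mul]]

lemma traceXpD (H : Matrix (Fin n) (Fin k) ℝ) (D : Matrix (Fin n) (Fin k) ℝ)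
    (U V : Matrix (Fin k) (Fin k) ℝ) (σ : Fin k → ℝ)
    (hU : Uᵀ * U = 1) (hV : Vᵀ * V = 1) (hUDV : Hᵀ * D = U * Matrix.diagonal σ * Vᵀ) :
    trace ((H * U * Vᵀ)ᵀ * D) = ∑ j, σ j := by
  have hUU : U * Uᵀ = 1 := mul_eq_one_comm.1 hU
  have e : (H * U * Vᵀ)ᵀ * D = V * Uᵀ * (Hᵀ * D) := by
    simp [Matrix.transpose_mul, Matrix.mul_assoc]
  rw [e, hUDV]
  have e2 : V * Uᵀ * (U * Matrix.diagonal σ * Vᵀ) = V * Matrix.diagonal σ * Vᵀ := by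
    have h3 : Uᵀ * (U * (Matrix.diagonal σ * Vᵀ)) = Matrix.diagonal σ * Vᵀ := by
      rw [← Matrix.mul_assoc, hU, Matrix.one_mul]
    simp [Matrix.mul_assoc, h3]
  rw [e2, Matrix.trace_mul_cycle V _ Vᵀ]
  rw [show Vᵀ * V * Matrix.diagonal σ = Matrix.diagonal σ by rw [hV, Matrix.one_mul]]
  simp [Matrix.trace, Matrix.diag]

lemma trace_XHHD_le (X H : Matrix (Fin n) (Fin k) ℝ) (D : Matrix (Fin n) (Fin k) ℝ)
    (U V : Matrix (Fin k) (Fin k) ℝ) (σ : Fin k → ℝ)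
    (hX : Xᵀ * X = 1) (hH : Hᵀ * H = 1) (hU : Uᵀ * U = 1) (hV : Vᵀ * V = 1)
    (hσ : ∀ j, 0 ≤ σ j) (hUDV : Hᵀ * D = U * Matrix.diagonal σ * Vᵀ) :
    trace (Xᵀ * H * (Hᵀ * D)) ≤ ∑ j, σ j := by
  have hXV : (X * V)ᵀ * (X * V) = 1 := by
    rw [Matrix.transpose_mul, Matrix.mul_assoc, ← Matrix.mul_assoc Xᵀ, hX, Matrix.one_mul, hV]
  have hHU : (H * U)ᵀ * (H * U) = 1 := by
    rw [Matrix.transpose_mul, Matrix.mul_assoc, ← Matrix.mul_assoc Hᵀ, hH, Matrix.one_mul, hU]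
  have e1 : (X * V)ᵀ * (H * U) * Matrix.diagonal σ
      = Vᵀ * (Xᵀ * H * U * Matrix.diagonal σ) := by
    simp [Matrix.transpose_mul, Matrix.mul_assoc]
  have e : trace ((X * V)ᵀ * (H * U) * Matrix.diagonal σ) = trace (Xᵀ * H * (Hᵀ * D)) := by
    rw [e1, Matrix.trace_mul_comm Vᵀ, hUDV]
    congr 1
    simp [Matrix.mul_assoc]
  rw [← e]
  exact csdiag (X * V) (H * U) hXV hHU σ hσ


lemma bern_core (θ a s : ℝ) (hs : 0 < s) (hθ0 : 0 ≤ θ) (hθ1 : θ ≤ 1)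
    (hsign : θ = 0 ∨ θ = 1 ∨ 0 ≤ a) :
    a * s ^ θ ≤ a * (1 + θ * (s - 1)) := by
  rcases hsign with h | h | h
  · subst h; simp
  · subst h; rw [Real.rpow_one]; nlinarith
  · have hber : s ^ θ ≤ 1 + θ * (s - 1) := by
      have := Real.geom_mean_le_arith_mean2_weighted hθ0 (by linarith : (0:ℝ) ≤ 1 - θ)
        hs.le zero_le_one (by ring)
      rw [Real.one_rpow, mul_one] at this
      linarith
    nlinarith

lemma step_core (θ a a' b b' : ℝ) (hb : 0 < b) (hb' : 0 < b')
    (hθ0 : 0 ≤ θ) (hθ1 : θ ≤ 1) (hsign : θ = 0 ∨ θ = 1 ∨ 0 ≤ a)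
    (hstar : a - θ * (a / b) * b ≤ a' - θ * (a / b) * b') :
    a / b ^ θ ≤ a' / b' ^ θ
      ∧ a' - a - θ * (a / b) * (b' - b) ≤ b' ^ θ * (a' / b' ^ θ - a / b ^ θ) := by
  have hbne : b ≠ 0 := hb.ne'
  have hs : 0 < b' / b := div_pos hb' hb
  have hb'θ : 0 < b' ^ θ := Real.rpow_pos_of_pos hb' θ
  have hbθ : 0 < b ^ θ := Real.rpow_pos_of_pos hb θ
  have hsθ : 0 < (b' / b) ^ θ := Real.rpow_pos_of_pos hs θ
  have hstar' : a * (1 + θ * (b' / b - 1)) ≤ a' := by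
    have h1 : a - θ * (a / b) * b = a - θ * a := by field_simp
    have h2 : a * (1 + θ * (b' / b - 1)) = a - θ * a + θ * (a / b) * b' := by field_simp; ring
    linarith [hstar, h1 ▸ hstar]
  have hcore := bern_core θ a (b' / b) hs hθ0 hθ1 hsign
  have hbb : b' ^ θ = b ^ θ * (b' / b) ^ θ := by
    rw [← Real.mul_rpow hb.le hs.le]
    congr 1
    field_simp
  have key : b' ^ θ * (a / b ^ θ) = a * (b' / b) ^ θ := by
    rw [hbb]; field_simp
  constructor
  · rw [div_le_div_iff₀ hbθ hb'θ]
    calc a * b' ^ θ = a * (b' / b) ^ θ * b ^ θ := by rw [hbb]; ring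
      _ ≤ a * (1 + θ * (b' / b - 1)) * b ^ θ := by nlinarith [hbθ]
      _ ≤ a' * b ^ θ := by nlinarith [hbθ]
  · have e1 : b' ^ θ * (a' / b' ^ θ - a / b ^ θ) = a' - a * (b' / b) ^ θ := by
      rw [mul_sub, key, mul_div_cancel₀ _ hb'θ.ne']
    rw [e1]
    have e2 : a + θ * (a / b) * (b' - b) = a * (1 + θ * (b' / b - 1)) := by field_simp
    linarith [hcore, e2]


variable {n k : ℕ}

lemma col_sq_one' (X : Matrix (Fin n) (Fin k) ℝ) (hX : Xᵀ * X = 1) (j : Fin k) :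
    ∑ i, X i j ^ 2 = 1 := by
  have h := congrFun (congrFun hX j) j
  simpa [Matrix.mul_apply, Matrix.transpose_apply, Matrix.one_apply, sq] using h

lemma trace_XtMX_sum' (M : Matrix (Fin n) (Fin n) ℝ) (X : Matrix (Fin n) (Fin k) ℝ) :
    trace (Xᵀ * M * X) = ∑ j : Fin k, ∑ i : Fin n, ∑ l : Fin n, X i j * M i l * X l j := by
  simp [Matrix.trace, Matrix.diag, Matrix.mul_apply, Matrix.transpose_apply, Finset.mul_sum,
    Finset.sum_mul]
  exact Finset.sum_congr rfl fun j _ => Finset.sum_comm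

lemma trace_XtMX_le (M : Matrix (Fin n) (Fin n) ℝ) (X : Matrix (Fin n) (Fin k) ℝ)
    (hX : Xᵀ * X = 1) :
    trace (Xᵀ * M * X) ≤ (k : ℝ) * ∑ p, ∑ q, |M p q| := by
  have habs : ∀ i j, |X i j| ≤ 1 := by
    intro i j
    have h1 : X i j ^ 2 ≤ 1 := by
      have := col_sq_one' X hX j
      have h2 : X i j ^ 2 ≤ ∑ i, X i j ^ 2 :=
        Finset.single_le_sum (f := fun i => X i j ^ 2) (fun l _ => sq_nonneg _)
          (Finset.mem_univ i)
      linarith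
    exact abs_le.2 ⟨by nlinarith, by nlinarith⟩
  rw [trace_XtMX_sum']
  calc ∑ j : Fin k, ∑ i : Fin n, ∑ l : Fin n, X i j * M i l * X l j
      ≤ ∑ _j : Fin k, ∑ i : Fin n, ∑ l : Fin n, |M i l| := by
        refine Finset.sum_le_sum fun j _ => Finset.sum_le_sum fun i _ =>
          Finset.sum_le_sum fun l _ => ?_
        calc X i j * M i l * X l j ≤ |X i j * M i l * X l j| := le_abs_self _
          _ = |X i j| * |M i l| * |X l j| := by rw [abs_mul, abs_mul]
          _ ≤ 1 * |M i l| * 1 := by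
              have h1 := habs i j; have h2 := habs l j
              have h3 := abs_nonneg (X i j); have h4 := abs_nonneg (X l j)
              have h5 := abs_nonneg (M i l)
              have h6 : |X i j| * |M i l| ≤ 1 * |M i l| :=
                mul_le_mul_of_nonneg_right h1 h5
              have h7 : |X i j| * |M i l| * |X l j| ≤ 1 * |M i l| * |X l j| :=
                mul_le_mul_of_nonneg_right h6 h4
              have h8 : 1 * |M i l| * |X l j| ≤ 1 * |M i l| * 1 :=
                mul_le_mul_of_nonneg_left h2 (by linarith)
              linarith
          _ = |M i l| := by ring
    _ = (k : ℝ) * ∑ p, ∑ q, |M p q| := by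
        rw [Finset.sum_const, nsmul_eq_mul]
        simp

lemma XpD_eq (H D : Matrix (Fin n) (Fin k) ℝ) (U V : Matrix (Fin k) (Fin k) ℝ)
    (σ : Fin k → ℝ) (hU : Uᵀ * U = 1) (hUDV : Hᵀ * D = U * Matrix.diagonal σ * Vᵀ) :
    (H * U * Vᵀ)ᵀ * D = V * Matrix.diagonal σ * Vᵀ := by
  have e : (H * U * Vᵀ)ᵀ * D = V * (Uᵀ * (Hᵀ * D)) := by
    simp [Matrix.transpose_mul, Matrix.mul_assoc]
  rw [e, hUDV]
  have h3 : Uᵀ * (U * (Matrix.diagonal σ * Vᵀ)) = Matrix.diagonal σ * Vᵀ := by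
    rw [← Matrix.mul_assoc, hU, Matrix.one_mul]
  simp [Matrix.mul_assoc, h3]

lemma psd_VdV (V : Matrix (Fin k) (Fin k) ℝ) (σ : Fin k → ℝ) (hσ : ∀ j, 0 ≤ σ j) :
    (V * Matrix.diagonal σ * Vᵀ).PosSemidef := by
  have h := (Matrix.posSemidef_diagonal_iff.2 hσ).mul_mul_conjTranspose_same V
  have e : Vᴴ = Vᵀ := by ext i j; simp [Matrix.conjTranspose_apply]
  rwa [e] at h

lemma symm_VdV (V : Matrix (Fin k) (Fin k) ℝ) (σ : Fin k → ℝ) :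
    (V * Matrix.diagonal σ * Vᵀ).IsSymm := by
  unfold Matrix.IsSymm
  simp [Matrix.transpose_mul, Matrix.diagonal_transpose, Matrix.mul_assoc]

lemma trace_indicator_quad (μ : Fin n → ℝ) (c : Fin k → Fin n) :
    trace ((Matrix.of fun (i : Fin n) (j : Fin k) => if i = c j then (1:ℝ) else 0)ᵀ
        * Matrix.diagonal μ
        * (Matrix.of fun (i : Fin n) (j : Fin k) => if i = c j then (1:ℝ) else 0))
      = ∑ j, μ (c j) := by
  rw [Matrix.mul_assoc]
  simp only [Matrix.trace, Matrix.diag, Matrix.mul_apply, Matrix.transpose_apply,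
    Matrix.diagonal_mul, Matrix.of_apply]
  refine Finset.sum_congr rfl fun j _ => ?_
  rw [Finset.sum_eq_single (c j)]
  · simp
  · intro i _ hne; simp [hne]
  · intro h; exact absurd (Finset.mem_univ _) h

variable {n k : ℕ}

lemma traceD_part (X Y : Matrix (Fin n) (Fin k) ℝ) (D : Matrix (Fin n) (Fin k) ℝ) :
    trace (Yᵀ * ((2⁻¹ : ℝ) • (D * Xᵀ + X * Dᵀ)) * Y) = trace (Xᵀ * Y * (Yᵀ * D)) := by
  have hD1 : trace (Yᵀ * (D * Xᵀ) * Y) = trace (Xᵀ * Y * (Yᵀ * D)) := by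
    have e : Yᵀ * (D * Xᵀ) * Y = Yᵀ * D * Xᵀ * Y := by simp [Matrix.mul_assoc]
    rw [e, Matrix.trace_mul_cycle (Yᵀ * D) Xᵀ Y, Matrix.trace_mul_cycle Y (Yᵀ * D) Xᵀ]
  have hD2 : trace (Yᵀ * (X * Dᵀ) * Y) = trace (Xᵀ * Y * (Yᵀ * D)) := by
    rw [← Matrix.trace_transpose (Yᵀ * (X * Dᵀ) * Y)]
    have e : (Yᵀ * (X * Dᵀ) * Y)ᵀ = Yᵀ * (D * Xᵀ) * Y := by
      simp [Matrix.transpose_mul, Matrix.mul_assoc]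
    rw [e, hD1]
  rw [Matrix.mul_smul, Matrix.smul_mul, Matrix.trace_smul, Matrix.mul_add, Matrix.add_mul,
    Matrix.trace_add, hD1, hD2]
  simp; ring

lemma quadE (A B : Matrix (Fin n) (Fin n) ℝ) (D : Matrix (Fin n) (Fin k) ℝ) (θ : ℝ)
    (X Y : Matrix (Fin n) (Fin k) ℝ) :
    trace (Yᵀ * Emat A B D θ X * Y)
      = (2 / trace (Xᵀ * B * X) ^ θ) *
        (trace (Yᵀ * A * Y) + trace (Xᵀ * Y * (Yᵀ * D))
          - θ * f1 A B D X * trace (Yᵀ * B * Y)) := by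
  unfold Emat
  rw [Matrix.mul_smul, Matrix.smul_mul, Matrix.trace_smul]
  rw [Matrix.mul_sub, Matrix.mul_add, Matrix.sub_mul, Matrix.add_mul, Matrix.trace_sub,
    Matrix.trace_add, traceD_part]
  rw [Matrix.mul_smul, Matrix.smul_mul, Matrix.trace_smul]
  simp [smul_eq_mul]
  try ring

lemma trace_self_quad (A B : Matrix (Fin n) (Fin n) ℝ) (D : Matrix (Fin n) (Fin k) ℝ) (θ : ℝ)
    (X : Matrix (Fin n) (Fin k) ℝ) (hX : Xᵀ * X = 1) :
    trace (Xᵀ * Emat A B D θ X * X)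
      = (2 / trace (Xᵀ * B * X) ^ θ) *
        ((trace (Xᵀ * A * X) + trace (Xᵀ * D))
          - θ * f1 A B D X * trace (Xᵀ * B * X)) := by
  rw [quadE]
  have h : Xᵀ * X * (Xᵀ * D) = Xᵀ * D := by rw [hX, Matrix.one_mul]
  rw [h]


lemma step_K_le (A B : Matrix (Fin n) (Fin n) ℝ) (D : Matrix (Fin n) (Fin k) ℝ) (θ : ℝ)
    (X H : Matrix (Fin n) (Fin k) ℝ) (U V : Matrix (Fin k) (Fin k) ℝ) (σ : Fin k → ℝ)
    (hbpos : 0 < trace (Xᵀ * B * X))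
    (hX : Xᵀ * X = 1) (hH : Hᵀ * H = 1) (hU : Uᵀ * U = 1) (hV : Vᵀ * V = 1)
    (hσ0 : ∀ j, 0 ≤ σ j) (hUDV : Hᵀ * D = U * Matrix.diagonal σ * Vᵀ) :
    trace (Hᵀ * Emat A B D θ X * H)
      ≤ (2 / trace (Xᵀ * B * X) ^ θ) *
        ((trace ((H * U * Vᵀ)ᵀ * A * (H * U * Vᵀ)) + trace ((H * U * Vᵀ)ᵀ * D))
          - θ * f1 A B D X * trace ((H * U * Vᵀ)ᵀ * B * (H * U * Vᵀ))) := by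
  rw [quadE]
  have hc : (0:ℝ) ≤ 2 / trace (Xᵀ * B * X) ^ θ := by
    have := Real.rpow_pos_of_pos hbpos θ
    positivity
  refine mul_le_mul_of_nonneg_left ?_ hc
  have hA' : trace (Hᵀ * A * H) = trace ((H * U * Vᵀ)ᵀ * A * (H * U * Vᵀ)) :=
    (orth_conj_trace A H U V hU hV).symm
  have hB' : trace (Hᵀ * B * H) = trace ((H * U * Vᵀ)ᵀ * B * (H * U * Vᵀ)) :=
    (orth_conj_trace B H U V hU hV).symm
  have hDle : trace (Xᵀ * H * (Hᵀ * D)) ≤ trace ((H * U * Vᵀ)ᵀ * D) := by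
    rw [traceXpD H D U V σ hU hV hUDV]
    exact trace_XHHD_le X H D U V σ hX hH hU hV hσ0 hUDV
  rw [hA', hB']
  linarith

/-- Theorem 4.3(d): an accumulation point `X_*` of the SCF iterates with eigenvalue gap
`λ_k(E(X_*)) > λ_{k+1}(E(X_*))` satisfies the KKT condition, `X_*ᵀD ⪰ 0`, and `X_*` spans
the invariant subspace of `E(X_*)` associated with its `k` largest eigenvalues. -/
theorem stmt16 {n k : ℕ} (hk : 1 ≤ k) (hkn : k < n)
    (A B : Matrix (Fin n) (Fin n) ℝ) (hA : A.IsSymm) (hB : B.PosSemidef)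
    (hrank : n - k < B.rank)
    (D : Matrix (Fin n) (Fin k) ℝ) (θ : ℝ) (hθ0 : 0 ≤ θ) (hθ1 : θ ≤ 1)
    (X : ℕ → Matrix (Fin n) (Fin k) ℝ) (hX : ∀ i, (X i)ᵀ * X i = 1)
    -- the SCF iteration: `X (i+1)` is obtained from `X i` via an orthonormal eigenbasis
    -- matrix `X̂` of `E(X i)` for its `k` largest eigenvalues, followed by post-processing
    (hSCF : ∀ i : ℕ,
      ∃ (Xh : Matrix (Fin n) (Fin k) ℝ) (U V : Matrix (Fin k) (Fin k) ℝ)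
        (σ : Fin k → ℝ) (μ : Fin n → ℝ) (Q : Matrix (Fin n) (Fin n) ℝ),
        Xhᵀ * Xh = 1
        ∧ Antitone μ ∧ Qᵀ * Q = 1 ∧ Emat A B D θ (X i) = Q * Matrix.diagonal μ * Qᵀ
        ∧ Emat A B D θ (X i) * Xh = Xh * (Xhᵀ * Emat A B D θ (X i) * Xh)
        ∧ trace (Xhᵀ * Emat A B D θ (X i) * Xh) = ∑ j : Fin k, μ (Fin.castLE hkn.le j)
        ∧ Uᵀ * U = 1 ∧ Vᵀ * V = 1 ∧ (∀ j, 0 ≤ σ j) ∧ Antitone σ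
        ∧ Xhᵀ * D = U * Matrix.diagonal σ * Vᵀ
        ∧ X (i + 1) = Xh * U * Vᵀ)
    -- requirement on the initial guess in case `0 < θ < 1`
    (hinit : 0 < θ → θ < 1 → 0 ≤ trace ((X 0)ᵀ * A * X 0) + trace ((X 0)ᵀ * D))
    -- a subsequence converges (entrywise) to `X_*`
    (Xs : Matrix (Fin n) (Fin k) ℝ) (hXs : Xsᵀ * Xs = 1)
    (φ : ℕ → ℕ) (hφ : StrictMono φ)
    (hconv : ∀ i j, Tendsto (fun t => X (φ t) i j) atTop (nhds (Xs i j)))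
    -- eigenvalue gap `λ_k(E(X_*)) − λ_{k+1}(E(X_*)) > 0`
    (μs : Fin n → ℝ) (hμs : Antitone μs)
    (Qs : Matrix (Fin n) (Fin n) ℝ) (hQs : Qsᵀ * Qs = 1)
    (hEigs : Emat A B D θ Xs = Qs * Matrix.diagonal μs * Qsᵀ)
    (hgap : μs ⟨k, hkn⟩ < μs ⟨k - 1, by omega⟩) :
    Emat A B D θ Xs * Xs = Xs * (Xsᵀ * Emat A B D θ Xs * Xs)
      ∧ (Xsᵀ * D).IsSymm
      ∧ (Xsᵀ * D).PosSemidef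
      ∧ trace (Xsᵀ * Emat A B D θ Xs * Xs) = ∑ j : Fin k, μs (Fin.castLE hkn.le j) := by
  classical
  choose H U V σ μ Q hH hμan hQ hE hinv htr hU hV hσ0 hσan hUDV hXsucc using hSCF
  set av : ℕ → ℝ := fun i => trace ((X i)ᵀ * A * X i) + trace ((X i)ᵀ * D) with hav
  set bv : ℕ → ℝ := fun i => trace ((X i)ᵀ * B * X i) with hbv
  have hbpos : ∀ i, 0 < bv i := fun i => trace_B_pos hkn B hB hrank (X i) (hX i)
  set Fv : ℕ → ℝ := fun i => av i / bv i ^ θ with hFv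
  have hf1 : ∀ i, f1 A B D (X i) = av i / bv i := fun i => rfl
  set Kv : ℕ → ℝ := fun i => ∑ j : Fin k, μ i (Fin.castLE hkn.le j) with hKv
  set Tv : ℕ → ℝ := fun i => trace ((X i)ᵀ * Emat A B D θ (X i) * X i) with hTv
  have hcpos : ∀ i, (0:ℝ) < 2 / bv i ^ θ := fun i => by
    have := Real.rpow_pos_of_pos (hbpos i) θ
    positivity
  have hTvf : ∀ i, Tv i = (2 / bv i ^ θ) * (av i - θ * (av i / bv i) * bv i) := fun i => by
    rw [hTv]
    simp only []
    rw [trace_self_quad A B D θ (X i) (hX i), hf1 i]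
  have hTleK : ∀ i, Tv i ≤ Kv i := fun i => by
    rw [hTv]
    simp only []
    rw [hE i]
    exact kyfan_ineq hk hkn (μ i) (hμan i) (Q i) (hQ i) (X i) (hX i)
  have hKle : ∀ i, Kv i ≤ (2 / bv i ^ θ) * (av (i+1) - θ * (av i / bv i) * bv (i+1)) := by
    intro i
    show (∑ j : Fin k, μ i (Fin.castLE hkn.le j))
      ≤ (2 / trace ((X i)ᵀ * B * (X i)) ^ θ) *
        ((trace ((X (i+1))ᵀ * A * (X (i+1))) + trace ((X (i+1))ᵀ * D))
          - θ * (av i / bv i) * trace ((X (i+1))ᵀ * B * (X (i+1))))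
    rw [← htr i, ← hf1 i, hXsucc i]
    exact step_K_le A B D θ (X i) (H i) (U i) (V i) (σ i) (hbpos i) (hX i) (hH i) (hU i)
      (hV i) (hσ0 i) (hUDV i)
  have hstar : ∀ i, av i - θ * (av i / bv i) * bv i
      ≤ av (i+1) - θ * (av i / bv i) * bv (i+1) := by
    intro i
    have h1 : (2 / bv i ^ θ) * (av i - θ * (av i / bv i) * bv i)
        ≤ (2 / bv i ^ θ) * (av (i+1) - θ * (av i / bv i) * bv (i+1)) := by
      rw [← hTvf i]
      exact le_trans (hTleK i) (hKle i)
    exact le_of_mul_le_mul_left h1 (hcpos i)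
  have hsign : ∀ i, θ = 0 ∨ θ = 1 ∨ 0 ≤ av i := by
    rcases eq_or_lt_of_le hθ0 with h0 | h0
    · exact fun i => Or.inl h0.symm
    rcases eq_or_lt_of_le hθ1 with h1 | h1
    · exact fun i => Or.inr (Or.inl h1)
    have hapos : ∀ i, 0 ≤ av i := by
      intro i
      induction i with
      | zero => exact hinit h0 h1
      | succ i ih =>
        have hm := (step_core θ (av i) (av (i+1)) (bv i) (bv (i+1)) (hbpos i) (hbpos (i+1))
          hθ0 hθ1 (Or.inr (Or.inr ih)) (hstar i)).1
        have hbθ : (0:ℝ) < bv i ^ θ := Real.rpow_pos_of_pos (hbpos i) θ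
        have hbθ' : (0:ℝ) < bv (i+1) ^ θ := Real.rpow_pos_of_pos (hbpos (i+1)) θ
        have hFi : 0 ≤ av i / bv i ^ θ := div_nonneg ih hbθ.le
        have hFi' : 0 ≤ av (i+1) / bv (i+1) ^ θ := le_trans hFi hm
        have := mul_nonneg hFi' hbθ'.le
        rwa [div_mul_cancel₀ _ hbθ'.ne'] at this
    exact fun i => Or.inr (Or.inr (hapos i))
  have hmono : ∀ i, Fv i ≤ Fv (i+1) := fun i =>
    (step_core θ (av i) (av (i+1)) (bv i) (bv (i+1)) (hbpos i) (hbpos (i+1))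
      hθ0 hθ1 (hsign i) (hstar i)).1
  have hKT : ∀ i, Kv i - Tv i ≤ (2 / bv i ^ θ) * (bv (i+1) ^ θ * (Fv (i+1) - Fv i)) := by
    intro i
    have h2 := (step_core θ (av i) (av (i+1)) (bv i) (bv (i+1)) (hbpos i) (hbpos (i+1))
      hθ0 hθ1 (hsign i) (hstar i)).2
    have h3 : Kv i - Tv i ≤ (2 / bv i ^ θ) *
        (av (i+1) - av i - θ * (av i / bv i) * (bv (i+1) - bv i)) := by
      have := hKle i
      rw [hTvf i]
      have e : (av (i+1) - θ * (av i / bv i) * bv (i+1))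
          - (av i - θ * (av i / bv i) * bv i)
          = av (i+1) - av i - θ * (av i / bv i) * (bv (i+1) - bv i) := by ring
      nlinarith [hcpos i]
    calc Kv i - Tv i ≤ (2 / bv i ^ θ) *
        (av (i+1) - av i - θ * (av i / bv i) * (bv (i+1) - bv i)) := h3
      _ ≤ (2 / bv i ^ θ) * (bv (i+1) ^ θ * (Fv (i+1) - Fv i)) := by
          refine mul_le_mul_of_nonneg_left ?_ (hcpos i).le
          exact h2
  -- topology
  have hXconv : Tendsto (fun t => X (φ t)) atTop (nhds Xs) := by
    refine tendsto_pi_nhds.2 ?_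
    intro i
    rw [tendsto_pi_nhds]
    intro j
    exact hconv i j
  have hacont : Continuous (fun M : Matrix (Fin n) (Fin k) ℝ =>
      trace (Mᵀ * A * M) + trace (Mᵀ * D)) :=
    (((continuous_id.matrix_transpose.matrix_mul continuous_const).matrix_mul
      continuous_id).matrix_trace).add
      ((continuous_id.matrix_transpose.matrix_mul continuous_const).matrix_trace)
  have hbcont : Continuous (fun M : Matrix (Fin n) (Fin k) ℝ => trace (Mᵀ * B * M)) :=
    ((continuous_id.matrix_transpose.matrix_mul continuous_const).matrix_mul
      continuous_id).matrix_trace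
  set as : ℝ := trace (Xsᵀ * A * Xs) + trace (Xsᵀ * D) with has
  set bs : ℝ := trace (Xsᵀ * B * Xs) with hbs
  have hbspos : 0 < bs := trace_B_pos hkn B hB hrank Xs hXs
  have hbsθ : (0:ℝ) < bs ^ θ := Real.rpow_pos_of_pos hbspos θ
  have haconv : Tendsto (fun t => av (φ t)) atTop (nhds as) := (hacont.tendsto Xs).comp hXconv
  have hbconv : Tendsto (fun t => bv (φ t)) atTop (nhds bs) := (hbcont.tendsto Xs).comp hXconv
  have hbθconv : Tendsto (fun t => bv (φ t) ^ θ) atTop (nhds (bs ^ θ)) :=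
    hbconv.rpow_const (Or.inl hbspos.ne')
  set Fs : ℝ := as / bs ^ θ with hFs
  have hFconv : Tendsto (fun t => Fv (φ t)) atTop (nhds Fs) := haconv.div hbθconv hbsθ.ne'
  have hmono' : Monotone Fv := monotone_nat_of_le_succ hmono
  have hφsucc : ∀ t, φ t + 1 ≤ φ (t + 1) := fun t => Nat.succ_le_of_lt (hφ (Nat.lt_succ_self t))
  have hFconv2 : Tendsto (fun t => Fv (φ t + 1)) atTop (nhds Fs) := by
    have h1 : Tendsto (fun t => Fv (φ (t + 1))) atTop (nhds Fs) :=
      hFconv.comp (tendsto_add_atTop_nat 1)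
    exact tendsto_of_tendsto_of_tendsto_of_le_of_le hFconv h1
      (fun t => hmono' (Nat.le_succ _)) (fun t => hmono' (hφsucc t))
  have hΔ : Tendsto (fun t => Fv (φ t + 1) - Fv (φ t)) atTop (nhds 0) := by
    simpa using hFconv2.sub hFconv
  -- uniform bound
  set CB : ℝ := (k : ℝ) * ∑ p, ∑ q, |B p q| + 1 with hCB
  have hbCB : ∀ i, bv i ≤ CB := fun i => by
    have := trace_XtMX_le B (X i) (hX i)
    rw [hCB]
    calc bv i ≤ (k:ℝ) * ∑ p, ∑ q, |B p q| := this
      _ ≤ _ := by linarith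
  set C : ℝ := (2 / (bs/2) ^ θ) * CB ^ θ with hC
  have hevb : ∀ᶠ t in atTop, bs/2 < bv (φ t) :=
    hbconv.eventually (lt_mem_nhds (by linarith))
  have hb2θ : (0:ℝ) < (bs/2) ^ θ := Real.rpow_pos_of_pos (by linarith) θ
  have hbound : ∀ᶠ t in atTop, Kv (φ t) - Tv (φ t) ≤ C * (Fv (φ t + 1) - Fv (φ t)) := by
    filter_upwards [hevb] with t hb2
    have h1 := hKT (φ t)
    have hΔ0 : (0:ℝ) ≤ Fv (φ t + 1) - Fv (φ t) := by linarith [hmono (φ t)]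
    have e1 : (2 / bv (φ t) ^ θ) ≤ 2 / (bs/2) ^ θ := by
      apply div_le_div_of_nonneg_left (by norm_num) hb2θ
      exact Real.rpow_le_rpow (by linarith) hb2.le hθ0
    have e2 : bv (φ t + 1) ^ θ ≤ CB ^ θ :=
      Real.rpow_le_rpow (hbpos _).le (hbCB _) hθ0
    have e3 : (0:ℝ) ≤ bv (φ t + 1) ^ θ := (Real.rpow_pos_of_pos (hbpos _) θ).le
    have e4 : (0:ℝ) < 2 / bv (φ t) ^ θ := hcpos _
    calc Kv (φ t) - Tv (φ t)
        ≤ (2 / bv (φ t) ^ θ) * (bv (φ t + 1) ^ θ * (Fv (φ t + 1) - Fv (φ t))) := h1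
      _ ≤ (2 / (bs/2) ^ θ) * (CB ^ θ * (Fv (φ t + 1) - Fv (φ t))) := by
          have f1 : bv (φ t + 1) ^ θ * (Fv (φ t + 1) - Fv (φ t))
              ≤ CB ^ θ * (Fv (φ t + 1) - Fv (φ t)) := mul_le_mul_of_nonneg_right e2 hΔ0
          have f2 : (0:ℝ) ≤ bv (φ t + 1) ^ θ * (Fv (φ t + 1) - Fv (φ t)) :=
            mul_nonneg e3 hΔ0
          calc (2 / bv (φ t) ^ θ) * (bv (φ t + 1) ^ θ * (Fv (φ t + 1) - Fv (φ t)))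
              ≤ (2 / (bs/2) ^ θ) * (bv (φ t + 1) ^ θ * (Fv (φ t + 1) - Fv (φ t))) :=
                mul_le_mul_of_nonneg_right e1 f2
            _ ≤ _ := mul_le_mul_of_nonneg_left f1 (by positivity)
      _ = C * (Fv (φ t + 1) - Fv (φ t)) := by rw [hC]; ring
  have hKT0 : Tendsto (fun t => Kv (φ t) - Tv (φ t)) atTop (nhds 0) := by
    have hup : Tendsto (fun t => C * (Fv (φ t + 1) - Fv (φ t))) atTop (nhds 0) := by
      simpa using hΔ.const_mul C
    refine tendsto_of_tendsto_of_tendsto_of_le_of_le' tendsto_const_nhds hup ?_ hbound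
    exact Filter.Eventually.of_forall fun t => by linarith [hTleK (φ t)]
  -- limits of Tv, Kv
  set Ts : ℝ := trace (Xsᵀ * Emat A B D θ Xs * Xs) with hTs
  have hTsf : Ts = 2 * (1 - θ) * Fs := by
    rw [hTs, trace_self_quad A B D θ Xs hXs]
    show (2 / bs ^ θ) * (as - θ * f1 A B D Xs * bs) = _
    have : f1 A B D Xs = as / bs := rfl
    rw [this, hFs]
    field_simp
  have hTvf2 : ∀ i, Tv i = 2 * (1 - θ) * Fv i := fun i => by
    rw [hTvf i, hFv]
    have hbne := (hbpos i).ne'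
    have hbθne := (Real.rpow_pos_of_pos (hbpos i) θ).ne'
    field_simp
  have hTconv : Tendsto (fun t => Tv (φ t)) atTop (nhds Ts) := by
    rw [hTsf]
    simp_rw [hTvf2]
    exact hFconv.const_mul _
  have hKconv : Tendsto (fun t => Kv (φ t)) atTop (nhds Ts) := by
    have := hKT0.add hTconv
    simpa using this
  -- the test matrix from Qs
  have hQQs : Qs * Qsᵀ = 1 := mul_eq_one_comm.1 hQs
  set Yh : Matrix (Fin n) (Fin k) ℝ := Qs.submatrix id (Fin.castLE hkn.le) with hYh
  have hYh1 : Yhᵀ * Yh = 1 := by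
    ext j j'
    have h := congrFun (congrFun hQs (Fin.castLE hkn.le j)) (Fin.castLE hkn.le j')
    simp only [Matrix.mul_apply, Matrix.transpose_apply, Matrix.one_apply] at h ⊢
    rw [show ∑ i, Yh i j * Yh i j'
        = ∑ i, Qs i (Fin.castLE hkn.le j) * Qs i (Fin.castLE hkn.le j') from rfl, h]
    simp [Fin.castLE_inj]
  have hZYh : Qsᵀ * Yh
      = Matrix.of (fun (i : Fin n) (j : Fin k) => if i = Fin.castLE hkn.le j then (1:ℝ) else 0) := by
    ext i j
    have h := congrFun (congrFun hQs i) (Fin.castLE hkn.le j)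
    simp only [Matrix.mul_apply, Matrix.transpose_apply, Matrix.one_apply] at h ⊢
    rw [show ∑ l, Qs l i * Yh l j = ∑ l, Qs l i * Qs l (Fin.castLE hkn.le j) from rfl, h]
    simp
  have hYtr : trace (Yhᵀ * Emat A B D θ Xs * Yh) = ∑ j : Fin k, μs (Fin.castLE hkn.le j) := by
    rw [hEigs, conj_form, hZYh]
    exact trace_indicator_quad μs _
  have hYle : ∀ t, trace (Yhᵀ * Emat A B D θ (X (φ t)) * Yh) ≤ Kv (φ t) := fun t => by
    rw [hE (φ t)]
    exact kyfan_ineq hk hkn (μ (φ t)) (hμan _) (Q _) (hQ _) Yh hYh1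
  have hYconv : Tendsto (fun t => trace (Yhᵀ * Emat A B D θ (X (φ t)) * Yh)) atTop
      (nhds (trace (Yhᵀ * Emat A B D θ Xs * Yh))) := by
    have hgcont : Continuous (fun M : Matrix (Fin n) (Fin k) ℝ =>
        trace (Mᵀ * Yh * (Yhᵀ * D))) :=
      ((continuous_id.matrix_transpose.matrix_mul continuous_const).matrix_mul
        continuous_const).matrix_trace
    have hgconv : Tendsto (fun t => trace ((X (φ t))ᵀ * Yh * (Yhᵀ * D))) atTop
        (nhds (trace (Xsᵀ * Yh * (Yhᵀ * D)))) := (hgcont.tendsto Xs).comp hXconv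
    have hrw : ∀ M : Matrix (Fin n) (Fin k) ℝ, trace (Yhᵀ * Emat A B D θ M * Yh)
        = (2 / trace (Mᵀ * B * M) ^ θ) * (trace (Yhᵀ * A * Yh) + trace (Mᵀ * Yh * (Yhᵀ * D))
          - θ * ((trace (Mᵀ * A * M) + trace (Mᵀ * D)) / trace (Mᵀ * B * M))
            * trace (Yhᵀ * B * Yh)) := fun M => quadE A B D θ M Yh
    simp_rw [hrw]
    have hcdiv : Tendsto (fun t => 2 / bv (φ t) ^ θ) atTop (nhds (2 / bs ^ θ)) :=
      tendsto_const_nhds.div hbθconv hbsθ.ne'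
    have hf1conv : Tendsto (fun t => av (φ t) / bv (φ t)) atTop (nhds (as / bs)) :=
      haconv.div hbconv hbspos.ne'
    exact hcdiv.mul ((tendsto_const_nhds.add hgconv).sub
      ((tendsto_const_nhds.mul hf1conv).mul tendsto_const_nhds))
  have hlow : ∑ j : Fin k, μs (Fin.castLE hkn.le j) ≤ Ts := by
    have h := le_of_tendsto_of_tendsto' hYconv hKconv hYle
    rwa [hYtr] at h
  have hupp : Ts ≤ ∑ j : Fin k, μs (Fin.castLE hkn.le j) := by
    rw [hTs, hEigs]
    exact kyfan_ineq hk hkn μs hμs Qs hQs Xs hXs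
  have hconc4 : trace (Xsᵀ * Emat A B D θ Xs * Xs) = ∑ j : Fin k, μs (Fin.castLE hkn.le j) :=
    le_antisymm hupp hlow
  -- conclusion 1: KKT via the gap
  set Z : Matrix (Fin n) (Fin k) ℝ := Qsᵀ * Xs with hZdef
  have hZZ1 : Zᵀ * Z = 1 := by
    rw [hZdef, Matrix.transpose_mul, Matrix.transpose_transpose, Matrix.mul_assoc,
      ← Matrix.mul_assoc Qs, hQQs, Matrix.one_mul, hXs]
  have hXsQZ : Qs * Z = Xs := by rw [hZdef, ← Matrix.mul_assoc, hQQs, Matrix.one_mul]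
  have hZrows : ∀ i : Fin n, k ≤ i.val → ∀ j, Z i j = 0 := by
    have hkf := kyfan_matrix hk hkn μs hμs Qs hQs Xs hXs
    rw [← hEigs, hconc4] at hkf
    have hgappos : (0:ℝ) < μs ⟨k - 1, by omega⟩ - μs ⟨k, hkn⟩ := by linarith [hgap]
    have hsnn : ∀ i ∈ Finset.univ.filter (fun i : Fin n => k ≤ i.val),
        (0:ℝ) ≤ ∑ j, (Qsᵀ * Xs) i j ^ 2 := fun i _ => row_sq_nonneg _ i
    have hS0 : ∑ i ∈ Finset.univ.filter (fun i : Fin n => k ≤ i.val),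
        (∑ j, (Qsᵀ * Xs) i j ^ 2) = 0 := by
      have hSnn := Finset.sum_nonneg hsnn
      refine le_antisymm ?_ hSnn
      refine le_of_mul_le_mul_left ?_ hgappos
      rw [mul_zero]
      linarith [hkf]
    intro i hi j
    have h1 := (Finset.sum_eq_zero_iff_of_nonneg hsnn).1 hS0 i
      (Finset.mem_filter.2 ⟨Finset.mem_univ _, hi⟩)
    have h2 : (Qsᵀ * Xs) i j ^ 2 = 0 := by
      have h3 : ∀ j' ∈ (Finset.univ : Finset (Fin k)), (0:ℝ) ≤ (Qsᵀ * Xs) i j' ^ 2 :=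
        fun j' _ => sq_nonneg _
      exact (Finset.sum_eq_zero_iff_of_nonneg h3).1 h1 j (Finset.mem_univ _)
    have := pow_eq_zero_iff (n := 2) (by norm_num) |>.1 h2
    exact this
  set Z0 : Matrix (Fin k) (Fin k) ℝ := Z.submatrix (Fin.castLE hkn.le) id with hZ0def
  have hext : ∀ f : Fin n → ℝ, (∀ i : Fin n, k ≤ i.val → f i = 0) →
      ∑ i, f i = ∑ i : Fin k, f (Fin.castLE hkn.le i) := by
    intro f hf
    rw [← sum_filter_lt hkn.le f]
    rw [← Finset.sum_filter_add_sum_filter_not Finset.univ (fun i : Fin n => i.val < k) f]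
    have : ∑ i ∈ Finset.univ.filter (fun i : Fin n => ¬ i.val < k), f i = 0 :=
      Finset.sum_eq_zero fun i hi => hf i (by simpa [not_lt] using (Finset.mem_filter.1 hi).2)
    rw [this, add_zero]
  have hZ01 : Z0ᵀ * Z0 = 1 := by
    ext j j'
    have h := congrFun (congrFun hZZ1 j) j'
    simp only [Matrix.mul_apply, Matrix.transpose_apply, Matrix.one_apply] at h ⊢
    rw [show ∑ i : Fin k, Z0 i j * Z0 i j'
        = ∑ i : Fin k, Z (Fin.castLE hkn.le i) j * Z (Fin.castLE hkn.le i) j' from rfl]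
    rw [← hext (fun i => Z i j * Z i j') (fun i hi => by
      show Z i j * Z i j' = 0
      rw [hZrows i hi j, zero_mul])]
    exact h
  have hZ0Z0 : Z0 * Z0ᵀ = 1 := mul_eq_one_comm.1 hZ01
  have hP : ∀ i l : Fin n, i.val < k → l.val < k →
      (Z * Zᵀ) i l = if i = l then (1:ℝ) else 0 := by
    intro i l hik hlk
    have h := congrFun (congrFun hZ0Z0 ⟨i.val, hik⟩) ⟨l.val, hlk⟩
    simp only [Matrix.mul_apply, Matrix.transpose_apply, Matrix.one_apply] at h ⊢
    have e : ∑ m, Z i m * Z l m = ∑ m, Z0 ⟨i.val, hik⟩ m * Z0 ⟨l.val, hlk⟩ m := by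
      refine Finset.sum_congr rfl fun m _ => ?_
      congr 1
    rw [e, h]
    have : ((⟨i.val, hik⟩ : Fin k) = ⟨l.val, hlk⟩) ↔ i = l := by
      constructor
      · intro hh; exact Fin.ext (by simpa using congrArg Fin.val hh)
      · intro hh; subst hh; rfl
    simp [this]
  have hP0 : ∀ i l : Fin n, (k ≤ i.val ∨ k ≤ l.val) → (Z * Zᵀ) i l = 0 := by
    intro i l hil
    simp only [Matrix.mul_apply, Matrix.transpose_apply]
    rcases hil with hi | hl
    · exact Finset.sum_eq_zero fun m _ => by rw [hZrows i hi m, zero_mul]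
    · exact Finset.sum_eq_zero fun m _ => by rw [hZrows l hl m, mul_zero]
  have hC1 : (Z * Zᵀ) * (Matrix.diagonal μs * Z) = Matrix.diagonal μs * Z := by
    ext i j
    rw [Matrix.mul_apply]
    have hdiag : ∀ (l : Fin n) (j : Fin k), (Matrix.diagonal μs * Z) l j = μs l * Z l j :=
      fun l j => by rw [Matrix.diagonal_mul]
    by_cases hik : i.val < k
    · rw [Finset.sum_eq_single i]
      · rw [hP i i hik hik]; simp
      · intro l _ hli
        by_cases hlk : l.val < k
        · have hne : i ≠ l := fun h => hli h.symm
          rw [hP i l hik hlk, if_neg hne, zero_mul]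
        · rw [hdiag, hZrows l (by omega) j]
          ring
      · intro h; exact absurd (Finset.mem_univ _) h
    · have hzero : ∀ l ∈ (Finset.univ : Finset (Fin n)),
          (Z * Zᵀ) i l * (Matrix.diagonal μs * Z) l j = 0 := by
        intro l _
        by_cases hlk : l.val < k
        · rw [hP0 i l (Or.inl (by omega))]; ring
        · rw [hdiag, hZrows l (by omega) j]; ring
      rw [Finset.sum_eq_zero hzero, hdiag, hZrows i (by omega) j]
      ring
  have hQsZ : Qsᵀ * (Qs * Z) = Z := by rw [← Matrix.mul_assoc, hQs, Matrix.one_mul]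
  have hconc1 : Emat A B D θ Xs * Xs = Xs * (Xsᵀ * Emat A B D θ Xs * Xs) := by
    have hXsE : Xsᵀ * Emat A B D θ Xs * Xs = Zᵀ * Matrix.diagonal μs * Z := by
      rw [hEigs, conj_form Qs (Matrix.diagonal μs) Xs]
    calc Emat A B D θ Xs * Xs
        = Qs * (Matrix.diagonal μs * Z) := by
          rw [hEigs, ← hXsQZ]
          simp only [Matrix.mul_assoc, hQsZ]
      _ = Qs * ((Z * Zᵀ) * (Matrix.diagonal μs * Z)) := by rw [hC1]
      _ = Xs * (Xsᵀ * Emat A B D θ Xs * Xs) := by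
          rw [hXsE, ← hXsQZ]
          simp only [Matrix.mul_assoc]
  -- conclusions 2 and 3
  have hMt : ∀ i : ℕ, ((X (i+1))ᵀ * D) = V i * Matrix.diagonal (σ i) * (V i)ᵀ := fun i => by
    rw [hXsucc i]
    exact XpD_eq (H i) D (U i) (V i) (σ i) (hU i) (hUDV i)
  have hφ1 : ∀ᶠ t in atTop, 1 ≤ φ t := by
    filter_upwards [Filter.eventually_ge_atTop 1] with t ht
    exact le_trans ht hφ.le_apply
  have hMconv : Tendsto (fun t => (X (φ t))ᵀ * D) atTop (nhds (Xsᵀ * D)) :=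
    (((continuous_id.matrix_transpose.matrix_mul continuous_const)).tendsto Xs).comp hXconv
  have hsymmt : ∀ᶠ t in atTop, ((X (φ t))ᵀ * D).IsSymm := by
    filter_upwards [hφ1] with t ht
    have e : φ t = (φ t - 1) + 1 := by omega
    rw [e, hMt (φ t - 1)]
    exact symm_VdV _ _
  have hsymm : (Xsᵀ * D).IsSymm := by
    show (Xsᵀ * D)ᵀ = Xsᵀ * D
    have hconvT : Tendsto (fun t => ((X (φ t))ᵀ * D)ᵀ) atTop (nhds ((Xsᵀ * D)ᵀ)) :=
      ((continuous_id.matrix_transpose).tendsto (Xsᵀ * D)).comp hMconv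
    refine tendsto_nhds_unique_of_eventuallyEq hconvT hMconv ?_
    filter_upwards [hsymmt] with t ht
    exact ht
  have hpsd : (Xsᵀ * D).PosSemidef := by
    refine Matrix.PosSemidef.of_dotProduct_mulVec_nonneg ?_ ?_
    · show (Xsᵀ * D)ᴴ = Xsᵀ * D
      rw [realCT]
      exact hsymm
    · intro x
      have hq : Continuous (fun M : Matrix (Fin k) (Fin k) ℝ => star x ⬝ᵥ M *ᵥ x) :=
        continuous_const.dotProduct (continuous_id.matrix_mulVec continuous_const)
      refine ge_of_tendsto ((hq.tendsto _).comp hMconv) ?_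
      filter_upwards [hφ1] with t ht
      have e : φ t = (φ t - 1) + 1 := by omega
      show 0 ≤ star x ⬝ᵥ ((X (φ t))ᵀ * D) *ᵥ x
      rw [e, hMt (φ t - 1)]
      exact (psd_VdV (V _) (σ _) (hσ0 _)).dotProduct_mulVec_nonneg x
  exact ⟨hconc1, hsymm, hpsd, hconc4⟩








end
end

section
/- Let {P_s^opt ∈ 𝕆^{n_s×k}}_{s=1}^v be a global maximizer of f_θ over the product of Stiefel manifolds 𝕆^{n_1×k} × ⋯ × 𝕆^{n_v×k}. Then for each s ∈ {1, …, v}, the matrix (P_s^opt)ᵀ D̂_s is symmetric positive semidefinite, where D̂_s = 2·Σ_{s'≠s} A_{s,s'} P_{s'}^opt is evaluated at the maximizer. -/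
open Matrix Finset

lemma trace_single_mul {k : ℕ} (a b : Fin k) (M : Matrix (Fin k) (Fin k) ℝ) :
    trace (single a b (1:ℝ) * M) = M b a := by
  simp [Matrix.trace, Matrix.diag, Matrix.mul_apply, Matrix.single, ite_and,
    Finset.sum_ite_eq]

lemma trace_vecMulVec_mul {k : ℕ} (x : Fin k → ℝ) (M : Matrix (Fin k) (Fin k) ℝ) :
    trace (vecMulVec x x * M) = dotProduct x (M *ᵥ x) := by
  simp only [Matrix.trace, Matrix.diag, Matrix.mul_apply, Matrix.vecMulVec_apply,
    dotProduct, Matrix.mulVec, Finset.mul_sum]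
  rw [Finset.sum_comm]
  exact Finset.sum_congr rfl fun i _ => Finset.sum_congr rfl fun j _ => by ring

lemma vecMulVec_mul_vecMulVec {k : ℕ} (x : Fin k → ℝ) :
    vecMulVec x x * vecMulVec x x = (dotProduct x x) • vecMulVec x x := by
  ext i j
  simp only [Matrix.mul_apply, Matrix.vecMulVec_apply, Matrix.smul_apply, dotProduct,
    smul_eq_mul, Finset.sum_mul]
  exact Finset.sum_congr rfl fun m _ => by ring

lemma transpose_single {k : ℕ} (a b : Fin k) :
    (single a b (1:ℝ))ᵀ = single b a 1 := by
  ext x y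
  simp [single, Matrix.transpose_apply, and_comm]

lemma psd_of_orth_trace_le {k : ℕ} (M : Matrix (Fin k) (Fin k) ℝ)
    (h : ∀ U : Matrix (Fin k) (Fin k) ℝ, Uᵀ * U = 1 → trace (Uᵀ * M) ≤ trace M) :
    M.PosSemidef := by
  rw [posSemidef_iff_dotProduct_mulVec]
  constructor
  · -- symmetry
    ext i j
    show M j i = M i j
    rcases eq_or_ne i j with rfl | hij
    · rfl
    set a : ℝ := M i i + M j j with ha
    set c : ℝ := M j i - M i j with hc
    suffices hc0 : c = 0 by linarith [hc0]
    by_contra hcne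
    have hr2 : (0:ℝ) < a^2 + c^2 := by positivity
    set r : ℝ := Real.sqrt (a^2 + c^2) with hrdef
    have hr : 0 < r := Real.sqrt_pos.mpr hr2
    set p : ℝ := a / r
    set q : ℝ := c / r
    have hpq : p^2 + q^2 = 1 := by
      simp only [p, q]
      field_simp
      rw [Real.sq_sqrt hr2.le]
    set S : Matrix (Fin k) (Fin k) ℝ := single i i 1 + single j j 1 with hSdef
    set K : Matrix (Fin k) (Fin k) ℝ := single j i 1 - single i j 1 with hKdef
    have hSS : S * S = S := by
      simp [hSdef, add_mul, mul_add, single_mul_single_same,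
        single_mul_single_of_ne _ _ _ _ hij, single_mul_single_of_ne _ _ _ _ hij.symm]
    have hKK : K * K = -S := by
      simp [hKdef, hSdef, sub_mul, mul_sub, single_mul_single_same,
        single_mul_single_of_ne _ _ _ _ hij, single_mul_single_of_ne _ _ _ _ hij.symm]
      abel
    have hSK : S * K = K := by
      simp [hKdef, hSdef, add_mul, mul_sub, single_mul_single_same,
        single_mul_single_of_ne _ _ _ _ hij, single_mul_single_of_ne _ _ _ _ hij.symm]
    have hKS : K * S = K := by
      simp [hKdef, hSdef, sub_mul, mul_add, single_mul_single_same,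
        single_mul_single_of_ne _ _ _ _ hij, single_mul_single_of_ne _ _ _ _ hij.symm]
      abel
    have hST : Sᵀ = S := by
      rw [hSdef, transpose_add, _root_.transpose_single, _root_.transpose_single]
    have hKT : Kᵀ = -K := by
      rw [hKdef, transpose_sub, _root_.transpose_single, _root_.transpose_single]; abel
    set U : Matrix (Fin k) (Fin k) ℝ := 1 + (p - 1) • S + q • K with hUdef
    have hUT : Uᵀ = 1 + (p - 1) • S - q • K := by
      simp [hUdef, transpose_add, transpose_smul, hST, hKT]
      abel
    have hUorth : Uᵀ * U = 1 := by
      rw [hUT, hUdef]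
      simp only [mul_add, add_mul, sub_mul, mul_sub, one_mul, mul_one,
        smul_mul_assoc, mul_smul_comm, hSS, hKK, hSK, hKS]
      match_scalars <;> nlinarith [hpq]
    have htr : trace (Uᵀ * M) = trace M + ((p - 1) * a + q * c) := by
      rw [hUT]
      simp only [add_mul, sub_mul, one_mul, smul_mul_assoc, trace_add, trace_sub, trace_smul,
        hSdef, hKdef, add_mul, sub_mul, trace_add, trace_sub, _root_.trace_single_mul]
      simp only [smul_eq_mul, ha, hc]
      ring
    have hle := h U hUorth
    rw [htr] at hle
    have hkey : (p - 1) * a + q * c ≤ 0 := by linarith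
    have hrr : r * r = a^2 + c^2 := Real.mul_self_sqrt hr2.le
    have hpa : p * a + q * c = r := by
      simp only [p, q]
      field_simp
      rw [← hrr]; ring
    have hra : r ≤ a := by nlinarith [hpa, hkey]
    have hc2 : c^2 ≤ 0 := by nlinarith [hrr, hr.le, hra]
    have hc0 : c^2 = 0 := le_antisymm hc2 (sq_nonneg c)
    exact hcne (sq_eq_zero_iff.mp hc0)
  · intro x
    by_cases hx : x = 0
    · simp [hx]
    have hd0 : (0:ℝ) ≤ dotProduct x x :=
      Finset.sum_nonneg fun i _ => mul_self_nonneg (x i)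
    have hd : 0 < dotProduct x x :=
      lt_of_le_of_ne hd0 (fun hh => hx (dotProduct_self_eq_zero.mp hh.symm))
    set d : ℝ := dotProduct x x with hddef
    set N : Matrix (Fin k) (Fin k) ℝ := vecMulVec x x with hNdef
    have hNT : Nᵀ = N := by
      ext i j; simp [hNdef, vecMulVec_apply, mul_comm]
    set U : Matrix (Fin k) (Fin k) ℝ := 1 - (2/d) • N with hUdef
    have hUT : Uᵀ = U := by
      rw [hUdef, transpose_sub, transpose_one, transpose_smul, hNT]
    have hNN : N * N = d • N := by rw [hNdef, _root_.vecMulVec_mul_vecMulVec, hddef]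
    have hUorth : Uᵀ * U = 1 := by
      rw [hUT, hUdef]
      simp only [sub_mul, mul_sub, one_mul, mul_one, smul_mul_assoc, mul_smul_comm,
        hNN, smul_smul]
      match_scalars
      · ring
      · field_simp
        ring
    have htr : trace (Uᵀ * M) = trace M - (2/d) * (dotProduct x (M *ᵥ x)) := by
      rw [hUT, hUdef, sub_mul, one_mul, smul_mul_assoc, trace_sub, trace_smul,
        hNdef, trace_vecMulVec_mul]
      rw [smul_eq_mul]
    have hle := h U hUorth
    rw [htr] at hle
    have hnn : 0 ≤ (2/d) * dotProduct x (M *ᵥ x) := by linarith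
    have h2d : (0:ℝ) < 2/d := by positivity
    have := (mul_nonneg_iff_of_pos_left h2d).mp hnn
    simpa using this

noncomputable section

/-- The multi-view objective
`f_θ({P_s}) = (Σ_{s,t} tr(P_sᵀ A_{s,t} P_t)) / (Σ_s tr(P_sᵀ B_s P_s))^θ`. -/
def fmv {v k : ℕ} (n : Fin v → ℕ)
    (A : ∀ s t : Fin v, Matrix (Fin (n s)) (Fin (n t)) ℝ)
    (B : ∀ s : Fin v, Matrix (Fin (n s)) (Fin (n s)) ℝ) (θ : ℝ)
    (P : ∀ s : Fin v, Matrix (Fin (n s)) (Fin k) ℝ) : ℝ :=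
  (∑ s, ∑ t, trace ((P s)ᵀ * A s t * P t)) / (∑ s, trace ((P s)ᵀ * B s * P s)) ^ θ

/-- Theorem 5.1(a): at a global maximizer of the multi-view objective over the product of
Stiefel manifolds, `(P_s)ᵀ D̂_s ⪰ 0` for each view `s`, where
`D̂_s = 2 Σ_{s'≠s} A_{s,s'} P_{s'}`. -/
theorem stmt17 {v k : ℕ} (hv : 1 ≤ v) (hk : 1 ≤ k)
    (n : Fin v → ℕ) (hn : ∀ s, k ≤ n s)
    (A : ∀ s t : Fin v, Matrix (Fin (n s)) (Fin (n t)) ℝ)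
    (hA : ∀ s t, (A s t)ᵀ = A t s)
    (B : ∀ s : Fin v, Matrix (Fin (n s)) (Fin (n s)) ℝ)
    (hB : ∀ s, (B s).PosSemidef)
    (hpos : ∀ P : ∀ s : Fin v, Matrix (Fin (n s)) (Fin k) ℝ,
      (∀ s, (P s)ᵀ * P s = 1) → 0 < ∑ s, trace ((P s)ᵀ * B s * P s))
    (θ : ℝ) (hθ0 : 0 ≤ θ) (hθ1 : θ ≤ 1)
    (P : ∀ s : Fin v, Matrix (Fin (n s)) (Fin k) ℝ)
    (hP : ∀ s, (P s)ᵀ * P s = 1)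
    (hmax : ∀ Q : ∀ s : Fin v, Matrix (Fin (n s)) (Fin k) ℝ,
      (∀ s, (Q s)ᵀ * Q s = 1) → fmv n A B θ Q ≤ fmv n A B θ P) :
    ∀ s : Fin v,
      ((P s)ᵀ * ((2 : ℝ) • ∑ s' ∈ univ.erase s, A s s' * P s')).PosSemidef := by
  intro s
  classical
  set D : Matrix (Fin (n s)) (Fin k) ℝ := ∑ s' ∈ univ.erase s, A s s' * P s' with hDdef
  set M : Matrix (Fin k) (Fin k) ℝ := (P s)ᵀ * D with hMdef
  have hsum : ∀ V : Matrix (Fin k) (Fin k) ℝ,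
      ∑ t' ∈ univ.erase s, trace (Vᵀ * ((P s)ᵀ * (A s t' * P t'))) = trace (Vᵀ * M) := by
    intro V
    rw [hMdef, hDdef, Matrix.mul_sum, Matrix.mul_sum, trace_sum]
  have hsum1 : ∑ t' ∈ univ.erase s, trace ((P s)ᵀ * (A s t' * P t')) = trace M := by
    have := hsum 1
    simpa using this
  -- the split of the double sum
  have hsplit : ∀ R : ∀ t : Fin v, Matrix (Fin (n t)) (Fin k) ℝ,
      (∑ s', ∑ t', trace ((R s')ᵀ * A s' t' * R t'))
      = trace ((R s)ᵀ * A s s * R s)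
        + (∑ t' ∈ univ.erase s, trace ((R s)ᵀ * A s t' * R t'))
        + ((∑ s' ∈ univ.erase s, trace ((R s')ᵀ * A s' s * R s))
        + ∑ s' ∈ univ.erase s, ∑ t' ∈ univ.erase s, trace ((R s')ᵀ * A s' t' * R t')) := by
    intro R
    have h1 : ∀ s' : Fin v, (∑ t', trace ((R s')ᵀ * A s' t' * R t'))
        = trace ((R s')ᵀ * A s' s * R s)
          + ∑ t' ∈ univ.erase s, trace ((R s')ᵀ * A s' t' * R t') :=
      fun s' => (Finset.add_sum_erase univ _ (Finset.mem_univ s)).symm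
    rw [← Finset.add_sum_erase univ (fun s' => ∑ t', trace ((R s')ᵀ * A s' t' * R t'))
        (Finset.mem_univ s), h1 s, Finset.sum_congr rfl (fun s' _ => h1 s'),
        Finset.sum_add_distrib]
  have hkey : ∀ U : Matrix (Fin k) (Fin k) ℝ, Uᵀ * U = 1 → trace (Uᵀ * M) ≤ trace M := by
    intro U hU
    have hUU : U * Uᵀ = 1 := mul_eq_one_comm.mp hU
    set Q : ∀ t, Matrix (Fin (n t)) (Fin k) ℝ := Function.update P s (P s * U) with hQdef
    have hQs : Q s = P s * U := Function.update_self s _ P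
    have hQne : ∀ t, t ≠ s → Q t = P t := fun t ht => Function.update_of_ne ht _ P
    have hQorth : ∀ t, (Q t)ᵀ * (Q t) = 1 := by
      intro t
      by_cases ht : t = s
      · subst ht
        rw [hQs, transpose_mul, Matrix.mul_assoc, ← Matrix.mul_assoc (P t)ᵀ, hP t,
          Matrix.one_mul, hU]
      · rw [hQne t ht]; exact hP t
    -- pieces for Q
    have e1 : trace ((Q s)ᵀ * A s s * Q s) = trace ((P s)ᵀ * A s s * P s) := by
      rw [hQs, transpose_mul]
      calc trace (Uᵀ * (P s)ᵀ * A s s * (P s * U))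
          = trace (Uᵀ * ((P s)ᵀ * A s s * P s * U)) := by simp only [Matrix.mul_assoc]
        _ = trace (((P s)ᵀ * A s s * P s * U) * Uᵀ) := trace_mul_comm _ _
        _ = trace ((P s)ᵀ * A s s * P s) := by
            rw [Matrix.mul_assoc ((P s)ᵀ * A s s * P s), hUU, Matrix.mul_one]
    have e2 : ∀ t' ∈ univ.erase s,
        trace ((Q s)ᵀ * A s t' * Q t') = trace (Uᵀ * ((P s)ᵀ * (A s t' * P t'))) := by
      intro t' ht'
      rw [hQs, hQne t' (Finset.ne_of_mem_erase ht'), transpose_mul]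
      simp only [Matrix.mul_assoc]
    have e3 : ∀ t' ∈ univ.erase s,
        trace ((Q t')ᵀ * A t' s * Q s) = trace (Uᵀ * ((P s)ᵀ * (A s t' * P t'))) := by
      intro t' ht'
      rw [hQs, hQne t' (Finset.ne_of_mem_erase ht'), ← trace_transpose]
      congr 1
      simp only [transpose_mul, transpose_transpose, hA t' s, Matrix.mul_assoc]
    -- pieces for P
    have f2 : ∀ t' ∈ univ.erase s,
        trace ((P s)ᵀ * A s t' * P t') = trace ((P s)ᵀ * (A s t' * P t')) := by
      intro t' _
      simp only [Matrix.mul_assoc]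
    have f3 : ∀ t' ∈ univ.erase s,
        trace ((P t')ᵀ * A t' s * P s) = trace ((P s)ᵀ * (A s t' * P t')) := by
      intro t' ht'
      rw [← trace_transpose]
      congr 1
      simp only [transpose_mul, transpose_transpose, hA t' s, Matrix.mul_assoc]
    have hrest : (∑ s' ∈ univ.erase s, ∑ t' ∈ univ.erase s,
          trace ((Q s')ᵀ * A s' t' * Q t'))
        = ∑ s' ∈ univ.erase s, ∑ t' ∈ univ.erase s,
          trace ((P s')ᵀ * A s' t' * P t') :=
      Finset.sum_congr rfl fun s' hs' => Finset.sum_congr rfl fun t' ht' => by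
        rw [hQne s' (Finset.ne_of_mem_erase hs'), hQne t' (Finset.ne_of_mem_erase ht')]
    have hnumQ : (∑ s', ∑ t', trace ((Q s')ᵀ * A s' t' * Q t'))
        = trace ((P s)ᵀ * A s s * P s) + trace (Uᵀ * M)
          + (trace (Uᵀ * M)
            + ∑ s' ∈ univ.erase s, ∑ t' ∈ univ.erase s,
              trace ((P s')ᵀ * A s' t' * P t')) := by
      rw [hsplit Q, e1, Finset.sum_congr rfl e2, Finset.sum_congr rfl e3, hsum U, hrest]
    have hnumP : (∑ s', ∑ t', trace ((P s')ᵀ * A s' t' * P t'))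
        = trace ((P s)ᵀ * A s s * P s) + trace M
          + (trace M
            + ∑ s' ∈ univ.erase s, ∑ t' ∈ univ.erase s,
              trace ((P s')ᵀ * A s' t' * P t')) := by
      rw [hsplit P, Finset.sum_congr rfl f2, Finset.sum_congr rfl f3, hsum1]
    have hden : (∑ s', trace ((Q s')ᵀ * B s' * Q s'))
        = ∑ s', trace ((P s')ᵀ * B s' * P s') := by
      refine Finset.sum_congr rfl fun t _ => ?_
      by_cases ht : t = s
      · subst ht
        rw [hQs, transpose_mul]
        calc trace (Uᵀ * (P t)ᵀ * B t * (P t * U))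
            = trace (Uᵀ * ((P t)ᵀ * B t * P t * U)) := by simp only [Matrix.mul_assoc]
          _ = trace (((P t)ᵀ * B t * P t * U) * Uᵀ) := trace_mul_comm _ _
          _ = trace ((P t)ᵀ * B t * P t) := by
              rw [Matrix.mul_assoc ((P t)ᵀ * B t * P t), hUU, Matrix.mul_one]
      · rw [hQne t ht]
    have hle := hmax Q hQorth
    unfold fmv at hle
    rw [hnumQ, hnumP, hden] at hle
    have hdpos : (0:ℝ) < (∑ s', trace ((P s')ᵀ * B s' * P s')) ^ θ :=
      Real.rpow_pos_of_pos (hpos P hP) θ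
    have := (div_le_div_iff_of_pos_right hdpos).mp hle
    linarith
  have hM := psd_of_orth_trace_le M hkey
  have h2 : (P s)ᵀ * ((2:ℝ) • D) = M + M := by
    rw [Matrix.mul_smul, two_smul, hMdef]
  rw [h2]
  exact hM.add hM

end
end

section
/- Let {P_s^opt ∈ 𝕆^{n_s×k}}_{s=1}^v be a local maximizer of f_θ over the product of Stiefel manifolds with f_θ({P_s^opt}) ≥ 0, and for each s evaluate α_s, β_s, D̂_s, Â_s, B̂_s, and E_s at {P_{s'}^opt}_{s'=1}^v. If (P_s^opt)ᵀ D̂_s is symmetric positive semidefinite, then P_s^opt is an orthonormal basis matrix of the invariant subspace of E_s(P_s^opt) associated with its k largest eigenvalues, i.e. E_s(P_s^opt)·P_s^opt = P_s^opt·((P_s^opt)ᵀE_s(P_s^opt)P_s^opt) and tr((P_s^opt)ᵀE_s(P_s^opt)P_s^opt) equals the sum of the k largest eigenvalues of the symmetric matrix E_s(P_s^opt). -/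
open Matrix Finset

noncomputable section

open Matrix Finset Real

set_option linter.unusedSectionVars false
set_option linter.unusedVariables false
set_option maxHeartbeats 1000000

noncomputable section

namespace Stmt18Aux

variable {a b : Type*} [Fintype a] [Fintype b] [DecidableEq a] [DecidableEq b]

lemma traceA (M : Matrix a b ℝ) (x : b → ℝ) (z : a → ℝ) :
    trace (M * vecMulVec x z) = z ⬝ᵥ (M *ᵥ x) := by
  simp only [Matrix.trace, Matrix.diag, Matrix.mul_apply, Matrix.vecMulVec_apply,
    dotProduct, Matrix.mulVec, Finset.mul_sum]
  apply Finset.sum_congr rfl; intros i _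
  apply Finset.sum_congr rfl; intros j _
  ring

lemma traceB (M : Matrix a b ℝ) (x : b → ℝ) (z : a → ℝ) :
    trace (vecMulVec x z * M) = z ⬝ᵥ (M *ᵥ x) := by
  rw [Matrix.trace_mul_comm, traceA]

lemma transpose_vecMulVec (x : a → ℝ) (z : b → ℝ) :
    (vecMulVec x z)ᵀ = vecMulVec z x := by
  ext i j; simp [Matrix.vecMulVec_apply, mul_comm]

lemma mul_vecMulVec' {c : Type*} [Fintype c] (M : Matrix a b ℝ) (x : b → ℝ) (z : c → ℝ) :
    M * vecMulVec x z = vecMulVec (M *ᵥ x) z := by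
  ext i j
  simp only [Matrix.mul_apply, Matrix.vecMulVec_apply, Matrix.mulVec, dotProduct,
    Finset.sum_mul]
  apply Finset.sum_congr rfl; intros; ring

lemma vecMulVec_mul {c : Type*} [Fintype c] (M : Matrix a b ℝ) (x : c → ℝ) (z : a → ℝ) :
    vecMulVec x z * M = vecMulVec x (Mᵀ *ᵥ z) := by
  ext i j
  simp only [Matrix.mul_apply, Matrix.vecMulVec_apply, Matrix.mulVec, dotProduct,
    Matrix.transpose_apply, Finset.mul_sum]
  apply Finset.sum_congr rfl; intros; ring

lemma smul_vecMulVec (r : ℝ) (x : a → ℝ) (z : b → ℝ) :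
    vecMulVec (r • x) z = r • vecMulVec x z := by
  ext i j; simp [Matrix.vecMulVec_apply, mul_assoc]

lemma vecMulVec_smul (r : ℝ) (x : a → ℝ) (z : b → ℝ) :
    vecMulVec x (r • z) = r • vecMulVec x z := by
  ext i j; simp [Matrix.vecMulVec_apply]; ring

lemma vecMulVec_mulVec (x : a → ℝ) (z : b → ℝ) (y : b → ℝ) :
    vecMulVec x z *ᵥ y = (z ⬝ᵥ y) • x := by
  ext i
  simp only [Matrix.mulVec, Matrix.vecMulVec_apply, dotProduct, Pi.smul_apply,
    smul_eq_mul, Finset.sum_mul]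
  apply Finset.sum_congr rfl; intros; ring

lemma dot_mulVec_left (P : Matrix a b ℝ) (u : a → ℝ) (z : b → ℝ) :
    u ⬝ᵥ (P *ᵥ z) = (Pᵀ *ᵥ u) ⬝ᵥ z := by
  rw [Matrix.dotProduct_mulVec, Matrix.mulVec_transpose]

lemma sym_dot_comm (C : Matrix a a ℝ) (hC : Cᵀ = C) (u w : a → ℝ) :
    w ⬝ᵥ (C *ᵥ u) = u ⬝ᵥ (C *ᵥ w) := by
  rw [dot_mulVec_left, hC, dotProduct_comm]

lemma trace_quad_expand (C : Matrix a a ℝ) (hC : Cᵀ = C) (P : Matrix a b ℝ)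
    (x : a → ℝ) (z : b → ℝ) :
    trace ((P + vecMulVec x z)ᵀ * C * (P + vecMulVec x z))
      = trace (Pᵀ * C * P) + 2 * (x ⬝ᵥ (C *ᵥ (P *ᵥ z)))
        + (x ⬝ᵥ (C *ᵥ x)) * (z ⬝ᵥ z) := by
  rw [Matrix.transpose_add, transpose_vecMulVec, Matrix.add_mul, Matrix.add_mul,
    Matrix.mul_add, Matrix.mul_add, trace_add, trace_add, trace_add]
  have h1 : trace (vecMulVec z x * C * P) = x ⬝ᵥ (C *ᵥ (P *ᵥ z)) := by
    rw [Matrix.mul_assoc, traceB, Matrix.mulVec_mulVec]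
  have h2 : trace (Pᵀ * C * vecMulVec x z) = x ⬝ᵥ (C *ᵥ (P *ᵥ z)) := by
    rw [traceA, ← Matrix.mulVec_mulVec, dotProduct_comm z, ← dot_mulVec_left P (C *ᵥ x) z,
      dotProduct_comm, sym_dot_comm C hC x (P *ᵥ z)]
  have h3 : trace (vecMulVec z x * C * vecMulVec x z)
      = (x ⬝ᵥ (C *ᵥ x)) * (z ⬝ᵥ z) := by
    rw [Matrix.mul_assoc, mul_vecMulVec', traceB, vecMulVec_mulVec, dotProduct_smul,
      smul_eq_mul]
    ring
  rw [h1, h2, h3]; ring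

lemma trace_lin_expand (P : Matrix a b ℝ) (D : Matrix a b ℝ) (x : a → ℝ) (z : b → ℝ) :
    trace ((P + vecMulVec x z)ᵀ * D) = trace (Pᵀ * D) + x ⬝ᵥ (D *ᵥ z) := by
  rw [Matrix.transpose_add, transpose_vecMulVec, Matrix.add_mul, trace_add, traceB]

lemma stiefel_curve (P : Matrix a b ℝ) (hP : Pᵀ * P = 1) (u : a → ℝ) (z : b → ℝ)
    (hu : u ⬝ᵥ u = 1) (hup : Pᵀ *ᵥ u = 0) (hz : z ⬝ᵥ z = 1) (t : ℝ) :
    (P + vecMulVec ((Real.cos t - 1) • (P *ᵥ z) + Real.sin t • u) z)ᵀ *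
      (P + vecMulVec ((Real.cos t - 1) • (P *ᵥ z) + Real.sin t • u) z) = 1 := by
  set c := Real.cos t
  set s := Real.sin t
  set w := P *ᵥ z with hw
  set x := (c - 1) • w + s • u with hx
  have hPw : Pᵀ *ᵥ w = z := by rw [hw, Matrix.mulVec_mulVec, hP, Matrix.one_mulVec]
  have hPx : Pᵀ *ᵥ x = (c - 1) • z := by
    rw [hx, Matrix.mulVec_add, Matrix.mulVec_smul, Matrix.mulVec_smul, hPw, hup,
      smul_zero, add_zero]
  have hww : w ⬝ᵥ w = 1 := by
    rw [hw, dot_mulVec_left, Matrix.mulVec_mulVec, hP, Matrix.one_mulVec, hz]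
  have huw : u ⬝ᵥ w = 0 := by
    rw [hw, dot_mulVec_left, hup, zero_dotProduct]
  have hwu : w ⬝ᵥ u = 0 := by rw [dotProduct_comm, huw]
  have hxx : x ⬝ᵥ x = (c - 1) ^ 2 + s ^ 2 := by
    rw [hx]
    simp only [dotProduct_add, add_dotProduct, dotProduct_smul, smul_dotProduct,
      smul_eq_mul, hww, huw, hwu, hu]
    ring
  have e1 : Pᵀ * vecMulVec x z = (c - 1) • vecMulVec z z := by
    rw [mul_vecMulVec', hPx, smul_vecMulVec]
  have e2 : vecMulVec z x * P = (c - 1) • vecMulVec z z := by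
    rw [vecMulVec_mul, hPx, vecMulVec_smul]
  have e3 : vecMulVec z x * vecMulVec x z = ((c - 1) ^ 2 + s ^ 2) • vecMulVec z z := by
    rw [vecMulVec_mul, transpose_vecMulVec, vecMulVec_mulVec, hxx, vecMulVec_smul]
  rw [Matrix.transpose_add, transpose_vecMulVec, Matrix.add_mul, Matrix.mul_add,
    Matrix.mul_add, hP, e1, e2, e3]
  have hco : (c - 1) • vecMulVec z z + ((c - 1) • vecMulVec z z
      + ((c - 1) ^ 2 + s ^ 2) • vecMulVec z z) = (0 : ℝ) • vecMulVec z z := by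
    rw [← add_smul, ← add_smul]
    congr 1
    have := Real.sin_sq_add_cos_sq t
    nlinarith [this]
  rw [add_assoc, hco, zero_smul, add_zero]

lemma le_zero_of_forall_le_mul {x K t0 : ℝ} (ht0 : 0 < t0)
    (h : ∀ t : ℝ, 0 < t → t < t0 → x ≤ t * K) : x ≤ 0 := by
  by_contra h'
  push_neg at h'
  have hK : 0 < K := by
    have := h (t0 / 2) (by linarith) (by linarith)
    nlinarith
  have hm : 0 < min (t0 / 2) (x / (2 * K)) := lt_min (by linarith) (by positivity)
  have h2 := h _ hm (lt_of_le_of_lt (min_le_left _ _) (by linarith))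
  have h3 : min (t0 / 2) (x / (2 * K)) * K ≤ x / (2 * K) * K :=
    mul_le_mul_of_nonneg_right (min_le_right _ _) hK.le
  have h4 : x / (2 * K) * K = x / 2 := by field_simp
  linarith

lemma bernoulli_rpow {x θ : ℝ} (hx : 0 ≤ x) (h0 : 0 ≤ θ) (h1 : θ ≤ 1) :
    x ^ θ ≤ 1 + θ * (x - 1) := by
  have h := Real.geom_mean_le_arith_mean2_weighted h0 (by linarith : (0:ℝ) ≤ 1 - θ)
    hx zero_le_one (by ring)
  rw [Real.one_rpow, mul_one] at h
  linarith

lemma sum_threshold {N : Type*} [Fintype N] (μ σ χ : N → ℝ) (c : ℝ)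
    (hsum : ∑ i, σ i = ∑ i, χ i) (h : ∀ i, (μ i - c) * (σ i - χ i) ≤ 0) :
    ∑ i, μ i * σ i ≤ ∑ i, μ i * χ i := by
  have h1 : ∑ i, (μ i - c) * (σ i - χ i) ≤ 0 :=
    Finset.sum_nonpos (fun i _ => h i)
  have h2 : ∑ i, (μ i - c) * (σ i - χ i)
      = ∑ i, μ i * σ i - ∑ i, μ i * χ i - c * ∑ i, σ i + c * ∑ i, χ i := by
    rw [Finset.mul_sum, Finset.mul_sum, ← Finset.sum_sub_distrib, ← Finset.sum_sub_distrib,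
      ← Finset.sum_add_distrib]
    apply Finset.sum_congr rfl; intros; ring
  rw [h2, hsum] at h1
  linarith

lemma eq_zero_of_mulVec_eq_zero (R : Matrix a b ℝ) (h : ∀ z, R *ᵥ z = 0) : R = 0 := by
  ext i j
  have h2 := congrFun (h (Pi.single j 1)) i
  rw [Matrix.mulVec_single] at h2
  simpa using h2

end Stmt18Aux


namespace Stmt18Aux

variable {a b : Type*} [Fintype a] [Fintype b] [DecidableEq a] [DecidableEq b]

lemma abs_entry_le_one {w : a → ℝ} (hw : w ⬝ᵥ w = 1) (i : a) : |w i| ≤ 1 := by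
  have h1 : w i * w i ≤ w ⬝ᵥ w := by
    unfold dotProduct
    exact Finset.single_le_sum (f := fun j => w j * w j)
      (fun j _ => mul_self_nonneg _) (Finset.mem_univ i)
  rw [hw] at h1
  rw [abs_le]
  constructor <;> nlinarith

/-- The core curve inequality. -/
lemma curve_ineq (C : Matrix a a ℝ) (hC : Cᵀ = C) (D : Matrix a b ℝ) (P : Matrix a b ℝ)
    (hP : Pᵀ * P = 1) (δ : ℝ) (hδ : 0 < δ)
    (hψ : ∀ Q : Matrix a b ℝ, Qᵀ * Q = 1 → (∀ i j, |Q i j - P i j| < δ) →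
      trace (Qᵀ * C * Q) + trace (Qᵀ * D) ≤ trace (Pᵀ * C * P) + trace (Pᵀ * D))
    (u : a → ℝ) (z : b → ℝ) (hu : u ⬝ᵥ u = 1) (hup : Pᵀ *ᵥ u = 0) (hz : z ⬝ᵥ z = 1)
    (t : ℝ) (h0t : 0 < t) (ht1 : t < 1) (htδ : t < δ / 2) :
    Real.sin t ^ 2 * (u ⬝ᵥ (C *ᵥ u) - (P *ᵥ z) ⬝ᵥ (C *ᵥ (P *ᵥ z)))
      + Real.sin t * (2 * (u ⬝ᵥ (C *ᵥ (P *ᵥ z))) + u ⬝ᵥ (D *ᵥ z))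
      + 2 * Real.sin t * (Real.cos t - 1) * (u ⬝ᵥ (C *ᵥ (P *ᵥ z)))
      + (Real.cos t - 1) * ((P *ᵥ z) ⬝ᵥ (D *ᵥ z)) ≤ 0 := by
  set c := Real.cos t with hc
  set s := Real.sin t with hs
  set w := P *ᵥ z with hw
  set x := (c - 1) • w + s • u with hx
  set Q : Matrix a b ℝ := P + vecMulVec x z with hQdef
  have hww : w ⬝ᵥ w = 1 := by
    rw [hw, dot_mulVec_left, Matrix.mulVec_mulVec, hP, Matrix.one_mulVec, hz]
  have hQs : Qᵀ * Q = 1 := stiefel_curve P hP u z hu hup hz t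
  have hcb : 1 - c ≤ t ^ 2 / 2 := by
    have := Real.one_sub_sq_div_two_le_cos (x := t); linarith
  have hc1 : c ≤ 1 := Real.cos_le_one t
  have hsb : s ≤ t := Real.sin_le h0t.le
  have hs0 : 0 ≤ s := by
    rw [hs]
    apply Real.sin_nonneg_of_nonneg_of_le_pi h0t.le
    linarith [Real.pi_gt_three]
  have hclose : ∀ i j, |Q i j - P i j| < δ := by
    intro i j
    have hxi : |x i| ≤ (1 - c) + s := by
      rw [hx]
      calc |(c - 1) * w i + s * u i| ≤ |(c-1) * w i| + |s * u i| := abs_add_le _ _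
        _ = |c-1| * |w i| + |s| * |u i| := by rw [abs_mul, abs_mul]
        _ ≤ |c-1| * 1 + |s| * 1 := by
            gcongr
            · exact abs_entry_le_one hww i
            · exact abs_entry_le_one hu i
        _ = (1 - c) + s := by
            rw [mul_one, mul_one, abs_of_nonpos (by linarith), abs_of_nonneg hs0]; ring
    have hzj : |z j| ≤ 1 := abs_entry_le_one hz j
    have : Q i j - P i j = x i * z j := by
      simp [hQdef, Matrix.add_apply, Matrix.vecMulVec_apply]
    rw [this, abs_mul]
    calc |x i| * |z j| ≤ ((1-c) + s) * 1 :=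
          mul_le_mul hxi hzj (abs_nonneg _) (by linarith)
      _ = (1-c) + s := mul_one _
      _ ≤ t^2/2 + t := by gcongr
      _ < δ := by nlinarith
  have hineq := hψ Q hQs hclose
  rw [hQdef, trace_quad_expand C hC P x z, trace_lin_expand P D x z, hz, mul_one] at hineq
  have hCx : C *ᵥ x = (c-1) • (C *ᵥ w) + s • (C *ᵥ u) := by
    rw [hx, Matrix.mulVec_add, Matrix.mulVec_smul, Matrix.mulVec_smul]
  have hwCu : w ⬝ᵥ (C *ᵥ u) = u ⬝ᵥ (C *ᵥ w) := sym_dot_comm C hC u w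
  have hxCw : x ⬝ᵥ (C *ᵥ w) = (c-1) * (w ⬝ᵥ (C *ᵥ w)) + s * (u ⬝ᵥ (C *ᵥ w)) := by
    rw [hx]; simp [add_dotProduct, smul_dotProduct]
  have hxCx : x ⬝ᵥ (C *ᵥ x) = (c-1)^2 * (w ⬝ᵥ (C *ᵥ w)) + 2*s*(c-1) * (u ⬝ᵥ (C *ᵥ w))
      + s^2 * (u ⬝ᵥ (C *ᵥ u)) := by
    rw [hCx, hx]
    simp only [dotProduct_add, add_dotProduct, dotProduct_smul, smul_dotProduct,
      smul_eq_mul, hwCu]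
    ring
  have hxDz : x ⬝ᵥ (D *ᵥ z) = (c-1) * (w ⬝ᵥ (D *ᵥ z)) + s * (u ⬝ᵥ (D *ᵥ z)) := by
    rw [hx]; simp [add_dotProduct, smul_dotProduct]
  rw [hxCw, hxCx, hxDz] at hineq
  have hsc := Real.sin_sq_add_cos_sq t
  rw [← hs, ← hc] at hsc
  have hco : (c-1)^2 + 2*(c-1) + s^2 = 0 := by nlinarith [hsc]
  have hkey : (c-1)^2*(w ⬝ᵥ (C *ᵥ w)) + 2*(c-1)*(w ⬝ᵥ (C *ᵥ w)) + s^2*(w ⬝ᵥ (C *ᵥ w)) = 0 := by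
    linear_combination (w ⬝ᵥ (C *ᵥ w)) * hco
  nlinarith [hineq, hkey]




lemma dps_nonneg (u : a → ℝ) : 0 ≤ u ⬝ᵥ u :=
  Finset.sum_nonneg fun i _ => mul_self_nonneg _

lemma arith_FO {X e dd g s c t : ℝ}
    (hci : s^2*X + s*g + 2*s*(c-1)*e + (c-1)*dd ≤ 0)
    (hs0 : 0 < s) (hst : s ≤ t) (hs2 : t/2 ≤ s) (hc1 : c ≤ 1)
    (hcb : 1 - c ≤ t^2/2) (h0t : 0 < t) (ht1 : t ≤ 1) :
    g ≤ t * (|X| + |e| + |dd|) := by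
  have hX1 : -X ≤ |X| := neg_le_abs X
  have he1 : e ≤ |e| := le_abs_self e
  have hd1 : dd ≤ |dd| := le_abs_self dd
  have h1c0 : 0 ≤ 1 - c := by linarith
  have p1 : s^2*(-X) ≤ s^2*|X| := mul_le_mul_of_nonneg_left hX1 (sq_nonneg s)
  have p1' : s^2*|X| ≤ s*(t*|X|) := by
    calc s^2*|X| = s*(s*|X|) := by ring
    _ ≤ s*(t*|X|) := mul_le_mul_of_nonneg_left
        (mul_le_mul_of_nonneg_right hst (abs_nonneg X)) hs0.le
  have p2 : 2*s*(1-c)*e ≤ 2*s*(1-c)*|e| :=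
    mul_le_mul_of_nonneg_left he1 (by positivity)
  have h2c : 2*(1-c) ≤ t := by nlinarith [mul_nonneg h0t.le (by linarith : (0:ℝ) ≤ 1 - t)]
  have p2' : 2*s*(1-c)*|e| ≤ s*(t*|e|) := by
    calc 2*s*(1-c)*|e| = s*((2*(1-c))*|e|) := by ring
    _ ≤ s*(t*|e|) := mul_le_mul_of_nonneg_left
        (mul_le_mul_of_nonneg_right h2c (abs_nonneg e)) hs0.le
  have p3 : (1-c)*dd ≤ (1-c)*|dd| := mul_le_mul_of_nonneg_left hd1 h1c0
  have h3c : 1 - c ≤ t*s := by nlinarith [mul_nonneg h0t.le (by linarith : (0:ℝ) ≤ s - t/2)]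
  have p3' : (1-c)*|dd| ≤ s*(t*|dd|) := by
    calc (1-c)*|dd| ≤ (t*s)*|dd| := mul_le_mul_of_nonneg_right h3c (abs_nonneg dd)
    _ = s*(t*|dd|) := by ring
  have key : s*g ≤ s*(t*(|X| + |e| + |dd|)) := by linarith [hci]
  exact le_of_mul_le_mul_left key hs0

lemma arith_SO {X e dd s c t : ℝ}
    (hci : s^2*X + 2*s*(c-1)*e + (c-1)*dd ≤ 0)
    (hdd0 : 0 ≤ dd) (hs0 : 0 < s) (hst : s ≤ t) (hs2 : t/2 ≤ s) (hc0 : 0 ≤ c) (hc1 : c ≤ 1)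
    (hcb : 1 - c ≤ t^2/2) (h0t : 0 < t) (ht1 : t ≤ 1) (hsc : s^2 + c^2 = 1) :
    X - dd ≤ t * (2*|e|) := by
  have he1 : e ≤ |e| := le_abs_self e
  have h1c0 : 0 ≤ 1 - c := by linarith
  have h1c : 1 - c ≤ s^2 := by nlinarith [mul_nonneg hc0 h1c0]
  have p2 : 2*s*(1-c)*e ≤ 2*s*(1-c)*|e| :=
    mul_le_mul_of_nonneg_left he1 (by positivity)
  have h2c : 2*(1-c) ≤ t^2 := by linarith
  have p2' : 2*s*(1-c)*|e| ≤ s^2*(t*(2*|e|)) := by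
    calc 2*s*(1-c)*|e| = s*((2*(1-c))*|e|) := by ring
    _ ≤ s*(t^2*|e|) := mul_le_mul_of_nonneg_left
        (mul_le_mul_of_nonneg_right h2c (abs_nonneg e)) hs0.le
    _ = t*(t*(s*|e|)) := by ring
    _ ≤ t*((2*s)*(s*|e|)) := mul_le_mul_of_nonneg_left
        (mul_le_mul_of_nonneg_right (by linarith) (mul_nonneg hs0.le (abs_nonneg e))) h0t.le
    _ = s^2*(t*(2*|e|)) := by ring
  have p3 : (1-c)*dd ≤ s^2*dd := mul_le_mul_of_nonneg_right h1c hdd0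
  have key : s^2*(X - dd) ≤ s^2*(t*(2*|e|)) := by linarith [hci]
  exact le_of_mul_le_mul_left key (by positivity)

/-- First and second order conditions for a local maximizer of
`Q ↦ tr(QᵀCQ) + tr(QᵀD)` on the Stiefel manifold. -/
lemma variational (C : Matrix a a ℝ) (hC : Cᵀ = C) (D : Matrix a b ℝ) (P : Matrix a b ℝ)
    (hP : Pᵀ * P = 1) (δ : ℝ) (hδ : 0 < δ)
    (hψ : ∀ Q : Matrix a b ℝ, Qᵀ * Q = 1 → (∀ i j, |Q i j - P i j| < δ) →
      trace (Qᵀ * C * Q) + trace (Qᵀ * D) ≤ trace (Pᵀ * C * P) + trace (Pᵀ * D))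
    (hd : ∀ z : b → ℝ, 0 ≤ (P *ᵥ z) ⬝ᵥ (D *ᵥ z)) :
    ((2:ℝ) • (C * P) + D = P * (Pᵀ * ((2:ℝ) • (C * P) + D)))
    ∧ (∀ (u : a → ℝ) (z : b → ℝ), u ⬝ᵥ u = 1 → Pᵀ *ᵥ u = 0 → z ⬝ᵥ z = 1 →
        u ⬝ᵥ (C *ᵥ u) ≤ (P *ᵥ z) ⬝ᵥ (C *ᵥ (P *ᵥ z)) + (P *ᵥ z) ⬝ᵥ (D *ᵥ z)) := by
  set M : Matrix a b ℝ := (2:ℝ) • (C * P) + D with hM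
  set t1 : ℝ := min 1 (δ/2) with ht1
  have ht1pos : 0 < t1 := lt_min one_pos (by linarith)
  have hMz : ∀ (u : a → ℝ) (z : b → ℝ), u ⬝ᵥ (M *ᵥ z)
      = 2 * (u ⬝ᵥ (C *ᵥ (P *ᵥ z))) + u ⬝ᵥ (D *ᵥ z) := by
    intro u z
    rw [hM, Matrix.add_mulVec, Matrix.smul_mulVec, dotProduct_add, dotProduct_smul,
      ← Matrix.mulVec_mulVec]
    simp [smul_eq_mul]
  -- trig facts on (0, t1)
  have trig : ∀ t : ℝ, 0 < t → t < t1 →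
      0 < Real.sin t ∧ Real.sin t ≤ t ∧ t/2 ≤ Real.sin t ∧ 0 ≤ Real.cos t ∧
      Real.cos t ≤ 1 ∧ 1 - Real.cos t ≤ t^2/2 := by
    intro t h0 hlt
    have ht1' : t < 1 := lt_of_lt_of_le hlt (min_le_left _ _)
    have hpi := Real.pi_gt_three
    refine ⟨Real.sin_pos_of_pos_of_lt_pi h0 (by linarith), Real.sin_le h0.le, ?_, ?_, Real.cos_le_one t, ?_⟩
    · have h3 := Real.sin_gt_sub_cube h0
      have h4 : t^3 ≤ t := by nlinarith [mul_nonneg (by nlinarith : (0:ℝ) ≤ 1 - t^2) h0.le]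
      nlinarith
    · apply Real.cos_nonneg_of_mem_Icc
      constructor <;> [linarith; linarith]
    · linarith [Real.one_sub_sq_div_two_le_cos (x := t)]
  -- first-order condition, unit vectors
  have FOunit : ∀ (u : a → ℝ) (z : b → ℝ), u ⬝ᵥ u = 1 → Pᵀ *ᵥ u = 0 → z ⬝ᵥ z = 1 →
      u ⬝ᵥ (M *ᵥ z) ≤ 0 := by
    intro u z hu hup hz
    apply le_zero_of_forall_le_mul ht1pos
      (K := |u ⬝ᵥ (C *ᵥ u) - (P *ᵥ z) ⬝ᵥ (C *ᵥ (P *ᵥ z))| + |u ⬝ᵥ (C *ᵥ (P *ᵥ z))|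
        + |(P *ᵥ z) ⬝ᵥ (D *ᵥ z)|)
    intro t h0t hltt
    have ht1' : t < 1 := lt_of_lt_of_le hltt (min_le_left _ _)
    obtain ⟨hs0, hst, hs2, hc0, hc1, hcb⟩ := trig t h0t hltt
    have hci := curve_ineq C hC D P hP δ hδ hψ u z hu hup hz t h0t
      ht1' (lt_of_lt_of_le hltt (min_le_right _ _))
    rw [hMz]
    exact arith_FO hci hs0 hst hs2 hc1 hcb h0t ht1'.le
  -- first-order, all vectors
  have FO : ∀ (u : a → ℝ) (z : b → ℝ), Pᵀ *ᵥ u = 0 → u ⬝ᵥ (M *ᵥ z) = 0 := by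
    have FOunit' : ∀ (u : a → ℝ) (z : b → ℝ), u ⬝ᵥ u = 1 → Pᵀ *ᵥ u = 0 → z ⬝ᵥ z = 1 →
        u ⬝ᵥ (M *ᵥ z) = 0 := by
      intro u z hu hup hz
      have h1 := FOunit u z hu hup hz
      have h2 := FOunit (-u) z (by simpa using hu) (by simp [Matrix.mulVec_neg, hup]) hz
      rw [neg_dotProduct] at h2
      linarith
    intro u z hup
    rcases eq_or_ne u 0 with rfl | hu0
    · simp
    rcases eq_or_ne z 0 with rfl | hz0
    · simp [Matrix.mulVec_zero]
    have hu2 : 0 < u ⬝ᵥ u := by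
      rcases lt_or_eq_of_le (dps_nonneg u) with h | h
      · exact h
      · exact absurd (dotProduct_self_eq_zero.mp h.symm) hu0
    have hz2 : 0 < z ⬝ᵥ z := by
      rcases lt_or_eq_of_le (dps_nonneg z) with h | h
      · exact h
      · exact absurd (dotProduct_self_eq_zero.mp h.symm) hz0
    set nu := Real.sqrt (u ⬝ᵥ u) with hnu
    set nz := Real.sqrt (z ⬝ᵥ z) with hnz
    have hnu0 : 0 < nu := Real.sqrt_pos.mpr hu2
    have hnz0 : 0 < nz := Real.sqrt_pos.mpr hz2
    have hu' : (nu⁻¹ • u) ⬝ᵥ (nu⁻¹ • u) = 1 := by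
      have hns : nu * nu = u ⬝ᵥ u := Real.mul_self_sqrt hu2.le
      rw [smul_dotProduct, dotProduct_smul, smul_eq_mul, smul_eq_mul, ← hns]
      field_simp
    have hz' : (nz⁻¹ • z) ⬝ᵥ (nz⁻¹ • z) = 1 := by
      have hns : nz * nz = z ⬝ᵥ z := Real.mul_self_sqrt hz2.le
      rw [smul_dotProduct, dotProduct_smul, smul_eq_mul, smul_eq_mul, ← hns]
      field_simp
    have hup' : Pᵀ *ᵥ (nu⁻¹ • u) = 0 := by rw [Matrix.mulVec_smul, hup, smul_zero]
    have h0 := FOunit' (nu⁻¹ • u) (nz⁻¹ • z) hu' hup' hz'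
    rw [Matrix.mulVec_smul, smul_dotProduct, dotProduct_smul, smul_eq_mul, smul_eq_mul] at h0
    have := mul_eq_zero.mp h0
    rcases this with h | h
    · exact absurd h (by positivity)
    rcases mul_eq_zero.mp h with h | h
    · exact absurd h (by positivity)
    exact h
  -- matrix first-order condition
  have hFO : M = P * (Pᵀ * M) := by
    have hR : M - P * (Pᵀ * M) = 0 := by
      apply eq_zero_of_mulVec_eq_zero
      intro z
      set R : Matrix a b ℝ := M - P * (Pᵀ * M) with hR
      set u : a → ℝ := R *ᵥ z with hu
      have hPR : Pᵀ * R = 0 := by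
        rw [hR, Matrix.mul_sub, ← Matrix.mul_assoc, ← Matrix.mul_assoc, hP,
          Matrix.one_mul, sub_self]
      have hPu : Pᵀ *ᵥ u = 0 := by
        rw [hu, Matrix.mulVec_mulVec, hPR, Matrix.zero_mulVec]
      have h1 : u ⬝ᵥ (M *ᵥ z) = 0 := FO u z hPu
      have h2 : u ⬝ᵥ (R *ᵥ z) = 0 := by
        rw [hR, Matrix.sub_mulVec, dotProduct_sub, h1, ← Matrix.mulVec_mulVec,
          dot_mulVec_left P u, hPu, zero_dotProduct, sub_zero]
      rw [← hu] at h2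
      exact dotProduct_self_eq_zero.mp h2
    have := sub_eq_zero.mp hR
    exact this
  refine ⟨hFO, ?_⟩
  -- second-order condition
  intro u z hu hup hz
  have hg : 2 * (u ⬝ᵥ (C *ᵥ (P *ᵥ z))) + u ⬝ᵥ (D *ᵥ z) = 0 := by
    rw [← hMz]; exact FO u z hup
  have hXd : u ⬝ᵥ (C *ᵥ u) - (P *ᵥ z) ⬝ᵥ (C *ᵥ (P *ᵥ z)) - (P *ᵥ z) ⬝ᵥ (D *ᵥ z) ≤ 0 := by
    apply le_zero_of_forall_le_mul ht1pos (K := 2 * |u ⬝ᵥ (C *ᵥ (P *ᵥ z))|)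
    intro t h0t hltt
    have ht1' : t < 1 := lt_of_lt_of_le hltt (min_le_left _ _)
    obtain ⟨hs0, hst, hs2, hc0, hc1, hcb⟩ := trig t h0t hltt
    have hci := curve_ineq C hC D P hP δ hδ hψ u z hu hup hz t h0t
      ht1' (lt_of_lt_of_le hltt (min_le_right _ _))
    rw [hg, mul_zero, add_zero] at hci
    have hci' : Real.sin t^2 * (u ⬝ᵥ (C *ᵥ u) - (P *ᵥ z) ⬝ᵥ (C *ᵥ (P *ᵥ z)))
        + 2*Real.sin t*(Real.cos t - 1)*(u ⬝ᵥ (C *ᵥ (P *ᵥ z)))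
        + (Real.cos t - 1)*((P *ᵥ z) ⬝ᵥ (D *ᵥ z)) ≤ 0 := by linarith [hci]
    have := arith_SO hci' (hd z) hs0 hst hs2 hc0 hc1 hcb h0t ht1'.le
      (Real.sin_sq_add_cos_sq t)
    linarith [this]
  linarith [hXd]

end Stmt18Aux

open Stmt18Aux in
/-- Theorem 5.1(b): at a local maximizer of the multi-view objective with nonnegative
objective value, if `(P_s)ᵀ D̂_s ⪰ 0` then `P_s` is an orthonormal basis matrix of the
invariant subspace of `E_s(P_s)` associated with its `k` largest eigenvalues. -/
theorem stmt18 {v k : ℕ} (hv : 1 ≤ v) (hk : 1 ≤ k)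
    (n : Fin v → ℕ) (hn : ∀ s, k ≤ n s)
    (A : ∀ s t : Fin v, Matrix (Fin (n s)) (Fin (n t)) ℝ)
    (hA : ∀ s t, (A s t)ᵀ = A t s)
    (B : ∀ s : Fin v, Matrix (Fin (n s)) (Fin (n s)) ℝ)
    (hB : ∀ s, (B s).PosSemidef)
    (hpos : ∀ P : ∀ s : Fin v, Matrix (Fin (n s)) (Fin k) ℝ,
      (∀ s, (P s)ᵀ * P s = 1) → 0 < ∑ s, trace ((P s)ᵀ * B s * P s))
    (θ : ℝ) (hθ0 : 0 ≤ θ) (hθ1 : θ ≤ 1)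
    (P : ∀ s : Fin v, Matrix (Fin (n s)) (Fin k) ℝ)
    (hP : ∀ s, (P s)ᵀ * P s = 1)
    -- `{P_s}` is a local maximizer
    (hloc : ∃ ε > (0:ℝ), ∀ Q : ∀ s : Fin v, Matrix (Fin (n s)) (Fin k) ℝ,
      (∀ s, (Q s)ᵀ * Q s = 1) → (∀ s i j, |Q s i j - P s i j| < ε) →
      fmv n A B θ Q ≤ fmv n A B θ P)
    (hf : 0 ≤ fmv n A B θ P)
    (s : Fin v)
    -- the quantities `α_s, β_s, D̂_s, Â_s, B̂_s, E_s` evaluated at `{P_s}`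
    (αs βs : ℝ)
    (hαs : αs = ∑ s' ∈ univ.erase s, ∑ t' ∈ univ.erase s,
      trace ((P s')ᵀ * A s' t' * P t'))
    (hβs : βs = ∑ s' ∈ univ.erase s, trace ((P s')ᵀ * B s' * P s'))
    (Dh : Matrix (Fin (n s)) (Fin k) ℝ)
    (hDh : Dh = (2 : ℝ) • ∑ s' ∈ univ.erase s, A s s' * P s')
    (Ah Bh : Matrix (Fin (n s)) (Fin (n s)) ℝ)
    (hAh : Ah = A s s + (αs / (k : ℝ)) • (1 : Matrix (Fin (n s)) (Fin (n s)) ℝ))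
    (hBh : Bh = B s + (βs / (k : ℝ)) • (1 : Matrix (Fin (n s)) (Fin (n s)) ℝ))
    (Es : Matrix (Fin (n s)) (Fin (n s)) ℝ)
    (hEs : Es = (2 / trace ((P s)ᵀ * Bh * P s) ^ θ) •
      (Ah + (2⁻¹ : ℝ) • (Dh * (P s)ᵀ + P s * Dhᵀ) - (θ * fmv n A B 1 P) • Bh))
    -- `μ 0 ≥ ⋯ ≥ μ (n_s − 1)` are the eigenvalues of the symmetric matrix `E_s`
    (μ : Fin (n s) → ℝ) (hμ : Antitone μ)
    (Q : Matrix (Fin (n s)) (Fin (n s)) ℝ) (hQ : Qᵀ * Q = 1)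
    (hEig : Es = Q * Matrix.diagonal μ * Qᵀ)
    -- assumption: `(P_s)ᵀ D̂_s` is symmetric positive semidefinite
    (hpsd : ((P s)ᵀ * Dh).PosSemidef) :
    Es * P s = P s * ((P s)ᵀ * Es * P s)
      ∧ trace ((P s)ᵀ * Es * P s) = ∑ i : Fin k, μ (Fin.castLE (hn s) i) := by
  classical
  obtain ⟨ε, hε, hloc'⟩ := hloc
  have hk0 : (k : ℝ) ≠ 0 := Nat.cast_ne_zero.mpr (by omega)
  set NP : ℝ := ∑ s', ∑ t', trace ((P s')ᵀ * A s' t' * P t') with hNP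
  set DP : ℝ := ∑ s', trace ((P s')ᵀ * B s' * P s') with hDP
  have hDPpos : 0 < DP := hpos P hP
  have hfmv : ∀ (θ' : ℝ) (Q' : ∀ s : Fin v, Matrix (Fin (n s)) (Fin k) ℝ),
      fmv n A B θ' Q' = (∑ s', ∑ t', trace ((Q' s')ᵀ * A s' t' * Q' t'))
        / (∑ s', trace ((Q' s')ᵀ * B s' * Q' s')) ^ θ' := fun _ _ => rfl
  have hf1 : fmv n A B 1 P = NP / DP := by
    rw [hfmv, ← hNP, ← hDP, Real.rpow_one]
  set f1 : ℝ := NP / DP with hf1def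
  have hDPθ : 0 < DP ^ θ := Real.rpow_pos_of_pos hDPpos θ
  have hNPnn : 0 ≤ NP := by
    have h0 : 0 ≤ NP / DP ^ θ := by rw [hfmv θ P, ← hNP, ← hDP] at hf; exact hf
    have := mul_nonneg h0 hDPθ.le
    rwa [div_mul_cancel₀ _ (ne_of_gt hDPθ)] at this
  have hf1nn : 0 ≤ f1 := div_nonneg hNPnn hDPpos.le
  set P0 : Matrix (Fin (n s)) (Fin k) ℝ := P s with hP0
  -- transpose trick
  have htrtr : ∀ (s' : Fin v) (Q0 : Matrix (Fin (n s)) (Fin k) ℝ),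
      trace ((P s')ᵀ * A s' s * Q0) = trace (Q0ᵀ * A s s' * P s') := by
    intro s' Q0
    rw [← trace_transpose ((P s')ᵀ * A s' s * Q0), Matrix.transpose_mul, Matrix.transpose_mul,
      Matrix.transpose_transpose, hA s' s, ← Matrix.mul_assoc]
  -- splitting the sums for an updated family
  have step : ∀ (F : Fin v → ℝ), ∑ s', F s' = F s + ∑ s' ∈ univ.erase s, F s' :=
    fun F => (Finset.add_sum_erase univ F (Finset.mem_univ s)).symm
  have hDtr : ∀ Q0 : Matrix (Fin (n s)) (Fin k) ℝ,
      trace (Q0ᵀ * Dh) = 2 * ∑ s' ∈ univ.erase s, trace (Q0ᵀ * A s s' * P s') := by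
    intro Q0
    rw [hDh, Matrix.mul_smul, trace_smul, Matrix.mul_sum, trace_sum, smul_eq_mul]
    congr 1
    exact Finset.sum_congr rfl fun s' _ => by rw [Matrix.mul_assoc]
  have hNsplit : ∀ Q0 : Matrix (Fin (n s)) (Fin k) ℝ,
      (∑ s', ∑ t', trace (((Function.update P s Q0) s')ᵀ * A s' t'
          * ((Function.update P s Q0) t')))
        = trace (Q0ᵀ * A s s * Q0) + trace (Q0ᵀ * Dh) + αs := by
    intro Q0
    set Qf := Function.update P s Q0 with hQf
    have hQfs : Qf s = Q0 := Function.update_self s Q0 P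
    have hQfo : ∀ t', t' ≠ s → Qf t' = P t' := fun t' ht' => Function.update_of_ne ht' Q0 P
    rw [step (fun s' => ∑ t', trace ((Qf s')ᵀ * A s' t' * Qf t'))]
    rw [step (fun t' => trace ((Qf s)ᵀ * A s t' * Qf t'))]
    have h1 : trace ((Qf s)ᵀ * A s s * Qf s) = trace (Q0ᵀ * A s s * Q0) := by rw [hQfs]
    have h2 : ∑ t' ∈ univ.erase s, trace ((Qf s)ᵀ * A s t' * Qf t')
        = ∑ t' ∈ univ.erase s, trace (Q0ᵀ * A s t' * P t') := by
      refine Finset.sum_congr rfl fun t' ht' => ?_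
      rw [hQfs, hQfo t' (Finset.ne_of_mem_erase ht')]
    have h3 : ∑ s' ∈ univ.erase s, ∑ t', trace ((Qf s')ᵀ * A s' t' * Qf t')
        = (∑ s' ∈ univ.erase s, trace (Q0ᵀ * A s s' * P s'))
          + ∑ s' ∈ univ.erase s, ∑ t' ∈ univ.erase s,
              trace ((P s')ᵀ * A s' t' * P t') := by
      rw [← Finset.sum_add_distrib]
      refine Finset.sum_congr rfl fun s' hs' => ?_
      have hs'ne : s' ≠ s := Finset.ne_of_mem_erase hs'
      rw [step (fun t' => trace ((Qf s')ᵀ * A s' t' * Qf t'))]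
      congr 1
      · rw [hQfo s' hs'ne, hQfs, htrtr]
      · refine Finset.sum_congr rfl fun t' ht' => ?_
        rw [hQfo s' hs'ne, hQfo t' (Finset.ne_of_mem_erase ht')]
    rw [h1, h2, h3, hDtr Q0, hαs]
    ring
  have hBsplit : ∀ Q0 : Matrix (Fin (n s)) (Fin k) ℝ,
      (∑ s', trace (((Function.update P s Q0) s')ᵀ * B s' * ((Function.update P s Q0) s')))
        = trace (Q0ᵀ * B s * Q0) + βs := by
    intro Q0
    set Qf := Function.update P s Q0 with hQf
    have hQfs : Qf s = Q0 := Function.update_self s Q0 P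
    have hQfo : ∀ t', t' ≠ s → Qf t' = P t' := fun t' ht' => Function.update_of_ne ht' Q0 P
    rw [step (fun s' => trace ((Qf s')ᵀ * B s' * Qf s')), hQfs, hβs]
    congr 1
    refine Finset.sum_congr rfl fun s' hs' => ?_
    rw [hQfo s' (Finset.ne_of_mem_erase hs')]
  have hupdP : Function.update P s (P s) = P := Function.update_eq_self s P
  have hNPs : NP = trace (P0ᵀ * A s s * P0) + trace (P0ᵀ * Dh) + αs := by
    have := hNsplit (P s); rwa [hupdP, ← hNP] at this
  have hDPs : DP = trace (P0ᵀ * B s * P0) + βs := by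
    have := hBsplit (P s); rwa [hupdP, ← hDP] at this
  -- the symmetric matrix C-hat
  set Ch : Matrix (Fin (n s)) (Fin (n s)) ℝ := Ah - (θ * f1) • Bh with hCh
  have hBsym : (B s)ᵀ = B s := by
    ext i j
    have := congrFun (congrFun (hB s).1 i) j
    simpa [Matrix.conjTranspose_apply] using this
  have hAhsym : Ahᵀ = Ah := by
    rw [hAh, Matrix.transpose_add, hA s s, Matrix.transpose_smul, Matrix.transpose_one]
  have hBhsym : Bhᵀ = Bh := by
    rw [hBh, Matrix.transpose_add, hBsym, Matrix.transpose_smul, Matrix.transpose_one]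
  have hChsym : Chᵀ = Ch := by
    rw [hCh, Matrix.transpose_sub, hAhsym, Matrix.transpose_smul, hBhsym]
  have htr1 : ∀ (Q0 : Matrix (Fin (n s)) (Fin k) ℝ) (r : ℝ), Q0ᵀ * Q0 = 1 →
      trace (Q0ᵀ * (r • (1 : Matrix (Fin (n s)) (Fin (n s)) ℝ)) * Q0) = r * k := by
    intro Q0 r h
    rw [Matrix.mul_smul, Matrix.mul_one, Matrix.smul_mul, h, trace_smul, trace_one]
    simp [smul_eq_mul]
  have htrAh : ∀ Q0 : Matrix (Fin (n s)) (Fin k) ℝ, Q0ᵀ * Q0 = 1 →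
      trace (Q0ᵀ * Ah * Q0) = trace (Q0ᵀ * A s s * Q0) + αs := by
    intro Q0 h
    rw [hAh, Matrix.mul_add, Matrix.add_mul, trace_add, htr1 Q0 _ h,
      div_mul_cancel₀ _ hk0]
  have htrBh : ∀ Q0 : Matrix (Fin (n s)) (Fin k) ℝ, Q0ᵀ * Q0 = 1 →
      trace (Q0ᵀ * Bh * Q0) = trace (Q0ᵀ * B s * Q0) + βs := by
    intro Q0 h
    rw [hBh, Matrix.mul_add, Matrix.add_mul, trace_add, htr1 Q0 _ h,
      div_mul_cancel₀ _ hk0]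
  -- value of the surrogate objective
  have hψval : ∀ Q0 : Matrix (Fin (n s)) (Fin k) ℝ, Q0ᵀ * Q0 = 1 →
      trace (Q0ᵀ * Ch * Q0) + trace (Q0ᵀ * Dh)
        = (trace (Q0ᵀ * A s s * Q0) + trace (Q0ᵀ * Dh) + αs)
          - θ * f1 * (trace (Q0ᵀ * B s * Q0) + βs) := by
    intro Q0 h
    rw [hCh, Matrix.mul_sub, Matrix.sub_mul, trace_sub, Matrix.mul_smul, Matrix.smul_mul,
      trace_smul, htrAh Q0 h, htrBh Q0 h, smul_eq_mul]
    ring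
  -- local maximality of the surrogate
  have hψ : ∀ Q0 : Matrix (Fin (n s)) (Fin k) ℝ, Q0ᵀ * Q0 = 1 →
      (∀ i j, |Q0 i j - P0 i j| < ε) →
      trace (Q0ᵀ * Ch * Q0) + trace (Q0ᵀ * Dh)
        ≤ trace (P0ᵀ * Ch * P0) + trace (P0ᵀ * Dh) := by
    intro Q0 hQ0 hclose
    set Qf := Function.update P s Q0 with hQf
    have hQfs : Qf s = Q0 := Function.update_self s Q0 P
    have hQfo : ∀ t', t' ≠ s → Qf t' = P t' := fun t' ht' => Function.update_of_ne ht' Q0 P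
    have hQfst : ∀ s', (Qf s')ᵀ * Qf s' = 1 := by
      intro s'
      rcases eq_or_ne s' s with rfl | hne
      · rw [hQfs]; exact hQ0
      · rw [hQfo s' hne]; exact hP s'
    have hQfclose : ∀ s' i j, |Qf s' i j - P s' i j| < ε := by
      intro s' i j
      rcases eq_or_ne s' s with rfl | hne
      · rw [hQfs]; exact hclose i j
      · rw [hQfo s' hne]; simpa using hε
    have hle := hloc' Qf hQfst hQfclose
    rw [hfmv θ Qf, hfmv θ P, ← hNP, ← hDP] at hle
    set NQ : ℝ := ∑ s', ∑ t', trace ((Qf s')ᵀ * A s' t' * Qf t') with hNQ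
    set DQ : ℝ := ∑ s', trace ((Qf s')ᵀ * B s' * Qf s') with hDQ
    have hDQpos : 0 < DQ := hpos Qf hQfst
    have hDQθ : 0 < DQ ^ θ := Real.rpow_pos_of_pos hDQpos θ
    -- NQ ≤ NP + θ f1 (DQ - DP)
    have h1 : NQ ≤ NP * (DQ / DP) ^ θ := by
      rw [div_le_div_iff₀ hDQθ hDPθ] at hle
      rw [Real.div_rpow hDQpos.le hDPpos.le, ← sub_nonneg]
      have h2 : 0 ≤ (NP * DQ ^ θ - NQ * DP ^ θ) / DP ^ θ := by
        apply div_nonneg _ hDPθ.le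
        linarith
      calc (0:ℝ) ≤ (NP * DQ ^ θ - NQ * DP ^ θ) / DP ^ θ := h2
        _ = NP * (DQ ^ θ / DP ^ θ) - NQ := by
            rw [sub_div, mul_div_assoc, mul_div_cancel_right₀ _ (ne_of_gt hDPθ)]
    have h2 : (DQ / DP) ^ θ ≤ 1 + θ * (DQ / DP - 1) :=
      bernoulli_rpow (by positivity) hθ0 hθ1
    have h3 : NQ ≤ NP + θ * f1 * (DQ - DP) := by
      have h4 : NP * (DQ / DP) ^ θ ≤ NP * (1 + θ * (DQ / DP - 1)) :=
        mul_le_mul_of_nonneg_left h2 hNPnn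
      have h5 : NP * (1 + θ * (DQ / DP - 1)) = NP + θ * f1 * (DQ - DP) := by
        rw [hf1def]; field_simp
      linarith
    -- conclude
    have hNQs := hNsplit Q0
    rw [← hQf, ← hNQ] at hNQs
    have hDQs := hBsplit Q0
    rw [← hQf, ← hDQ] at hDQs
    rw [hψval Q0 hQ0, hψval P0 (hP s), ← hNQs, ← hDQs, ← hNPs, ← hDPs]
    linarith
  -- positive semidefiniteness of the linear term along P0
  have hd : ∀ z : Fin k → ℝ, 0 ≤ (P0 *ᵥ z) ⬝ᵥ (Dh *ᵥ z) := by
    intro z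
    have h1 := hpsd.dotProduct_mulVec_nonneg z
    have h2 : (P0 *ᵥ z) ⬝ᵥ (Dh *ᵥ z) = z ⬝ᵥ ((P0ᵀ * Dh) *ᵥ z) := by
      rw [dotProduct_comm, dot_mulVec_left P0 (Dh *ᵥ z) z, dotProduct_comm,
        Matrix.mulVec_mulVec]
    rw [h2]
    simpa using h1
  -- apply the variational lemma
  obtain ⟨FO, SO⟩ := variational Ch hChsym Dh P0 (hP s) ε hε hψ hd
  have hPP : P0ᵀ * P0 = 1 := hP s
  set τ : ℝ := 2 / trace (P0ᵀ * Bh * P0) ^ θ with hτ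
  have hbP : trace (P0ᵀ * Bh * P0) = DP := by rw [htrBh P0 hPP, ← hDPs]
  have hτpos : 0 < τ := by rw [hτ, hbP]; exact div_pos two_pos hDPθ
  set G : Matrix (Fin (n s)) (Fin (n s)) ℝ :=
    Ch + (2⁻¹:ℝ) • (Dh * P0ᵀ + P0 * Dhᵀ) with hG
  have hEsG : Es = τ • G := by
    rw [hEs, hτ, hG, hCh, hf1]
    congr 1
    abel
  have hFOhalf : Ch * P0 + (2⁻¹:ℝ) • Dh
      = P0 * (P0ᵀ * (Ch * P0)) + (2⁻¹:ℝ) • (P0 * (P0ᵀ * Dh)) := by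
    have h3 := congrArg (fun X : Matrix (Fin (n s)) (Fin k) ℝ => (2⁻¹:ℝ) • X) FO
    calc Ch * P0 + (2⁻¹:ℝ) • Dh = (2⁻¹:ℝ) • ((2:ℝ) • (Ch * P0) + Dh) := by module
    _ = (2⁻¹:ℝ) • (P0 * (P0ᵀ * ((2:ℝ) • (Ch * P0) + Dh))) := h3
    _ = P0 * (P0ᵀ * (Ch * P0)) + (2⁻¹:ℝ) • (P0 * (P0ᵀ * Dh)) := by
        rw [Matrix.mul_add, Matrix.mul_smul, Matrix.mul_add, Matrix.mul_smul]
        module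
  have e1 : G * P0 = Ch * P0 + (2⁻¹:ℝ) • (Dh + P0 * (Dhᵀ * P0)) := by
    rw [hG, Matrix.add_mul, Matrix.smul_mul, Matrix.add_mul, Matrix.mul_assoc Dh P0ᵀ P0,
      hPP, Matrix.mul_one, Matrix.mul_assoc P0 Dhᵀ P0]
  have t1 : P0ᵀ * (Dh * P0ᵀ + P0 * Dhᵀ) * P0 = P0ᵀ * Dh + Dhᵀ * P0 := by
    rw [Matrix.mul_add, Matrix.add_mul]
    congr 1
    · rw [Matrix.mul_assoc, Matrix.mul_assoc Dh P0ᵀ P0, hPP, Matrix.mul_one]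
    · rw [← Matrix.mul_assoc P0ᵀ P0 Dhᵀ, hPP, Matrix.one_mul]
  have e2 : P0ᵀ * G * P0 = P0ᵀ * (Ch * P0) + (2⁻¹:ℝ) • (P0ᵀ * Dh + Dhᵀ * P0) := by
    rw [hG, Matrix.mul_add, Matrix.mul_smul, Matrix.add_mul, Matrix.smul_mul, t1,
      Matrix.mul_assoc P0ᵀ Ch P0]
  have hGP : G * P0 = P0 * (P0ᵀ * G * P0) := by
    rw [e1, e2, Matrix.mul_add, Matrix.mul_smul, Matrix.mul_add, smul_add, smul_add,
      ← add_assoc, ← add_assoc, hFOhalf]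
  have parta : Es * P0 = P0 * (P0ᵀ * Es * P0) := by
    rw [hEsG, Matrix.smul_mul, Matrix.mul_smul, Matrix.smul_mul, Matrix.mul_smul, hGP]
  refine ⟨parta, ?_⟩
  -- Part (b)
  have hGsym : Gᵀ = G := by
    rw [hG]
    simp only [Matrix.transpose_add, Matrix.transpose_smul, Matrix.transpose_mul,
      Matrix.transpose_transpose, hChsym]
    rw [add_comm (P0 * Dhᵀ) (Dh * P0ᵀ)]
  have hEsym : Esᵀ = Es := by rw [hEsG, Matrix.transpose_smul, hGsym]
  set M : Matrix (Fin k) (Fin k) ℝ := P0ᵀ * Es * P0 with hM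
  have hInv : Es * P0 = P0 * M := parta
  have hQQt : Q * Qᵀ = 1 := mul_eq_one_comm.mp hQ
  have hEQ : Es * Q = Q * Matrix.diagonal μ := by
    rw [hEig, Matrix.mul_assoc (Q * Matrix.diagonal μ) Qᵀ Q, hQ, Matrix.mul_one]
  have hEsq : ∀ i, Es *ᵥ (fun l => Q l i) = μ i • (fun l => Q l i) := by
    intro i; funext l
    have h1 : (Es * Q) l i = (Q * Matrix.diagonal μ) l i := by rw [hEQ]
    rw [Matrix.mul_diagonal] at h1
    have h2 : (Es *ᵥ fun l => Q l i) l = (Es * Q) l i := by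
      simp [Matrix.mulVec, Matrix.mul_apply, dotProduct]
    rw [h2, h1]
    simp [mul_comm]
  have hqq : ∀ i, (fun l => Q l i) ⬝ᵥ (fun l => Q l i) = 1 := by
    intro i
    have h1 : (Qᵀ * Q) i i = 1 := by rw [hQ]; simp [Matrix.one_apply]
    rw [← h1]
    simp [Matrix.mul_apply, dotProduct, Matrix.transpose_apply]
  set av : Fin (n s) → (Fin k → ℝ) := fun i => P0ᵀ *ᵥ (fun l => Q l i) with hav
  set σ : Fin (n s) → ℝ := fun i => av i ⬝ᵥ av i with hσ
  set rv : Fin (n s) → (Fin (n s) → ℝ) := fun i => (fun l => Q l i) - P0 *ᵥ av i with hrv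
  have hPr : ∀ i, P0ᵀ *ᵥ rv i = 0 := by
    intro i
    rw [hrv]
    simp only [Matrix.mulVec_sub, Matrix.mulVec_mulVec, hPP, Matrix.one_mulVec]
    rw [hav]
    exact sub_self _
  have hqdecomp : ∀ i, (fun l => Q l i) = P0 *ᵥ av i + rv i := by
    intro i; rw [hrv]; funext l; simp
  have hqa : ∀ i, (fun l => Q l i) ⬝ᵥ (P0 *ᵥ av i) = σ i := by
    intro i
    rw [dot_mulVec_left P0 (fun l => Q l i) (av i)]
  have hpa : ∀ i, (P0 *ᵥ av i) ⬝ᵥ (P0 *ᵥ av i) = σ i := by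
    intro i
    rw [dot_mulVec_left P0 (P0 *ᵥ av i) (av i), Matrix.mulVec_mulVec, hPP,
      Matrix.one_mulVec]
  have hrr : ∀ i, rv i ⬝ᵥ rv i = 1 - σ i := by
    intro i
    rw [hrv, sub_dotProduct, dotProduct_sub, dotProduct_sub, hqq i, hqa i,
      dotProduct_comm (P0 *ᵥ av i) (fun l => Q l i), hqa i, hpa i]
    ring
  have hσ0 : ∀ i, 0 ≤ σ i := fun i => Stmt18Aux.dps_nonneg (av i)
  have hσ1 : ∀ i, σ i ≤ 1 := fun i => by
    have := Stmt18Aux.dps_nonneg (rv i); rw [hrr i] at this; linarith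
  have havY : ∀ i j, av i j = (P0ᵀ * Q) j i := by
    intro i j
    simp [hav, Matrix.mulVec, Matrix.mul_apply, dotProduct]
  have hσY : ∀ i, σ i = ∑ j, (P0ᵀ * Q) j i * (P0ᵀ * Q) j i := by
    intro i
    rw [hσ]
    simp only
    rw [dotProduct]
    exact Finset.sum_congr rfl fun j _ => by rw [havY]
  have hsumσ : ∑ i, σ i = (k : ℝ) := by
    have h1 : ∑ i, σ i = trace ((P0ᵀ * Q) * (Qᵀ * P0)) := by
      have hYT : (Qᵀ * P0 : Matrix (Fin (n s)) (Fin k) ℝ) = (P0ᵀ * Q)ᵀ := by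
        rw [Matrix.transpose_mul, Matrix.transpose_transpose]
      rw [hYT]
      have h2 : trace ((P0ᵀ * Q) * (P0ᵀ * Q)ᵀ)
          = ∑ j, ∑ i, (P0ᵀ * Q) j i * (P0ᵀ * Q) j i := by
        simp only [Matrix.trace, Matrix.diag, Matrix.mul_apply, Matrix.transpose_apply]
      rw [h2, Finset.sum_comm]
      exact Finset.sum_congr rfl fun i _ => hσY i
    rw [h1, Matrix.mul_assoc P0ᵀ Q (Qᵀ * P0), ← Matrix.mul_assoc Q Qᵀ P0, hQQt,
      Matrix.one_mul, hPP, trace_one]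
    simp
  have htrM : trace M = ∑ i, μ i * σ i := by
    have h0 : trace M = trace (((Qᵀ * P0) * (P0ᵀ * Q)) * Matrix.diagonal μ) := by
      rw [hM, hEig]
      have ha : P0ᵀ * (Q * Matrix.diagonal μ * Qᵀ) * P0
          = (P0ᵀ * Q) * (Matrix.diagonal μ * (Qᵀ * P0)) := by
        simp only [Matrix.mul_assoc]
      rw [ha, Matrix.trace_mul_comm, Matrix.mul_assoc, Matrix.trace_mul_comm,
        Matrix.mul_assoc]
    rw [h0]
    have h1 : ∀ N : Matrix (Fin (n s)) (Fin (n s)) ℝ,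
        trace (N * Matrix.diagonal μ) = ∑ i, N i i * μ i := by
      intro N; simp [Matrix.trace, Matrix.diag, Matrix.mul_diagonal]
    rw [h1]
    apply Finset.sum_congr rfl; intro i _
    have h2 : ((Qᵀ * P0) * (P0ᵀ * Q)) i i = σ i := by
      rw [hσY i]
      simp only [Matrix.mul_apply, Matrix.transpose_apply]
      refine Finset.sum_congr rfl fun j _ => ?_
      congr 1
      exact Finset.sum_congr rfl fun l _ => mul_comm _ _
    rw [h2, mul_comm]
  have hMsym : Mᵀ = M := by
    rw [hM, Matrix.transpose_mul, Matrix.transpose_mul, Matrix.transpose_transpose,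
      hEsym, ← Matrix.mul_assoc]
  have hPtEs : P0ᵀ * Es = M * P0ᵀ := by
    calc P0ᵀ * Es = (Esᵀ * P0)ᵀ := by
          rw [Matrix.transpose_mul, Matrix.transpose_transpose]
    _ = (Es * P0)ᵀ := by rw [hEsym]
    _ = (P0 * M)ᵀ := by rw [hInv]
    _ = Mᵀ * P0ᵀ := by rw [Matrix.transpose_mul]
    _ = M * P0ᵀ := by rw [hMsym]
  have hMw : ∀ w : Fin k → ℝ, M *ᵥ w = P0ᵀ *ᵥ (Es *ᵥ (P0 *ᵥ w)) := by
    intro w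
    have h0 : P0ᵀ *ᵥ (Es *ᵥ (P0 *ᵥ w)) = ((P0ᵀ * Es) * P0) *ᵥ w := by
      rw [Matrix.mulVec_mulVec (P0 *ᵥ w) P0ᵀ Es, Matrix.mulVec_mulVec w (P0ᵀ * Es) P0]
    rw [h0, hM]
  have hMa : ∀ i, M *ᵥ av i = μ i • av i := by
    intro i
    have h1 : P0 *ᵥ av i = (fun l => Q l i) - rv i := by
      rw [hrv]; funext l; simp
    have h2 : M *ᵥ av i = P0ᵀ *ᵥ (Es *ᵥ (P0 *ᵥ av i)) := hMw (av i)
    have h3 : P0ᵀ *ᵥ (Es *ᵥ rv i) = 0 := by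
      rw [Matrix.mulVec_mulVec, hPtEs, ← Matrix.mulVec_mulVec, hPr i, Matrix.mulVec_zero]
    rw [h2, h1, Matrix.mulVec_sub, hEsq i, Matrix.mulVec_sub, h3, sub_zero,
      Matrix.mulVec_smul, hav]
  have hEr : ∀ i, Es *ᵥ rv i = μ i • rv i := by
    intro i
    rw [hrv, Matrix.mulVec_sub, hEsq i, Matrix.mulVec_mulVec, hInv,
      ← Matrix.mulVec_mulVec, hMa i, Matrix.mulVec_smul, ← smul_sub]
  -- Rayleigh comparison using the second-order condition
  have hwG : ∀ z : Fin k → ℝ, (P0 *ᵥ z) ⬝ᵥ (Es *ᵥ (P0 *ᵥ z))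
      = τ * ((P0 *ᵥ z) ⬝ᵥ (Ch *ᵥ (P0 *ᵥ z)) + (P0 *ᵥ z) ⬝ᵥ (Dh *ᵥ z)) := by
    intro z
    set w := P0 *ᵥ z with hw
    have hPw : P0ᵀ *ᵥ w = z := by rw [hw, Matrix.mulVec_mulVec, hPP, Matrix.one_mulVec]
    rw [hEsG, Matrix.smul_mulVec, dotProduct_smul, smul_eq_mul]
    congr 1
    rw [hG, Matrix.add_mulVec, Matrix.smul_mulVec, Matrix.add_mulVec,
      dotProduct_add, dotProduct_smul, smul_eq_mul, dotProduct_add]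
    have ha : w ⬝ᵥ ((Dh * P0ᵀ) *ᵥ w) = w ⬝ᵥ (Dh *ᵥ z) := by
      rw [← Matrix.mulVec_mulVec, hPw]
    have hb : w ⬝ᵥ ((P0 * Dhᵀ) *ᵥ w) = w ⬝ᵥ (Dh *ᵥ z) := by
      rw [← Matrix.mulVec_mulVec, dot_mulVec_left P0 w (Dhᵀ *ᵥ w), hPw,
        dot_mulVec_left Dhᵀ z w, Matrix.transpose_transpose, dotProduct_comm]
    rw [ha, hb]
    ring
  have huG : ∀ u : Fin (n s) → ℝ, P0ᵀ *ᵥ u = 0 →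
      u ⬝ᵥ (Es *ᵥ u) = τ * (u ⬝ᵥ (Ch *ᵥ u)) := by
    intro u hup
    rw [hEsG, Matrix.smul_mulVec, dotProduct_smul, smul_eq_mul]
    congr 1
    rw [hG, Matrix.add_mulVec, Matrix.smul_mulVec, Matrix.add_mulVec,
      dotProduct_add, dotProduct_smul, smul_eq_mul, dotProduct_add]
    have ha : u ⬝ᵥ ((Dh * P0ᵀ) *ᵥ u) = 0 := by
      rw [← Matrix.mulVec_mulVec, hup, Matrix.mulVec_zero, dotProduct_zero]
    have hb : u ⬝ᵥ ((P0 * Dhᵀ) *ᵥ u) = 0 := by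
      rw [← Matrix.mulVec_mulVec, dot_mulVec_left P0 u (Dhᵀ *ᵥ u), hup, zero_dotProduct]
    rw [ha, hb]
    ring
  have hcomp : ∀ i j, rv i ≠ 0 → av j ≠ 0 → μ i ≤ μ j := by
    intro i j hri haj
    have hrrpos : 0 < rv i ⬝ᵥ rv i :=
      lt_of_le_of_ne (Stmt18Aux.dps_nonneg (rv i))
        (fun h => hri (dotProduct_self_eq_zero.mp h.symm))
    have haapos : 0 < av j ⬝ᵥ av j :=
      lt_of_le_of_ne (Stmt18Aux.dps_nonneg (av j))
        (fun h => haj (dotProduct_self_eq_zero.mp h.symm))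
    set u : Fin (n s) → ℝ := (Real.sqrt (rv i ⬝ᵥ rv i))⁻¹ • rv i with hu
    set z : Fin k → ℝ := (Real.sqrt (av j ⬝ᵥ av j))⁻¹ • av j with hz
    have hru : 0 < Real.sqrt (rv i ⬝ᵥ rv i) := Real.sqrt_pos.mpr hrrpos
    have haz : 0 < Real.sqrt (av j ⬝ᵥ av j) := Real.sqrt_pos.mpr haapos
    have huu : u ⬝ᵥ u = 1 := by
      rw [hu, smul_dotProduct, dotProduct_smul, smul_eq_mul, smul_eq_mul,
        ← Real.mul_self_sqrt hrrpos.le]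
      field_simp
      rw [Real.sqrt_sq hru.le]
    have hzz : z ⬝ᵥ z = 1 := by
      rw [hz, smul_dotProduct, dotProduct_smul, smul_eq_mul, smul_eq_mul,
        ← Real.mul_self_sqrt haapos.le]
      field_simp
      rw [Real.sqrt_sq haz.le]
    have huP : P0ᵀ *ᵥ u = 0 := by rw [hu, Matrix.mulVec_smul, hPr i, smul_zero]
    have hEu : Es *ᵥ u = μ i • u := by
      rw [hu, Matrix.mulVec_smul, hEr i, smul_comm]
    have hMz : M *ᵥ z = μ j • z := by
      rw [hz, Matrix.mulVec_smul, hMa j, smul_comm]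
    have hso := SO u z huu huP hzz
    have hmui : μ i = τ * (u ⬝ᵥ (Ch *ᵥ u)) := by
      rw [← huG u huP, hEu, dotProduct_smul, smul_eq_mul, huu, mul_one]
    have hmuj : μ j = τ * ((P0 *ᵥ z) ⬝ᵥ (Ch *ᵥ (P0 *ᵥ z)) + (P0 *ᵥ z) ⬝ᵥ (Dh *ᵥ z)) := by
      rw [← hwG z]
      have h2 : z ⬝ᵥ (M *ᵥ z) = (P0 *ᵥ z) ⬝ᵥ (Es *ᵥ (P0 *ᵥ z)) := by
        rw [hMw z, dot_mulVec_left P0ᵀ z (Es *ᵥ (P0 *ᵥ z)), Matrix.transpose_transpose]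
      rw [← h2, hMz, dotProduct_smul, smul_eq_mul, hzz, mul_one]
    rw [hmui, hmuj]
    exact mul_le_mul_of_nonneg_left hso hτpos.le
  -- the indicator of the top-k indices
  set χ : Fin (n s) → ℝ := fun i => if (i : ℕ) < k then 1 else 0 with hχ
  have hsumχ : ∑ i, χ i = (k : ℝ) := by
    rw [hχ]
    rw [Finset.sum_boole]
    congr 1
    apply Finset.card_eq_of_bijective (fun i hi => ⟨i, lt_of_lt_of_le hi (hn s)⟩)
    · intro a ha
      simp only [Finset.mem_filter, Finset.mem_univ, true_and] at ha
      exact ⟨a, ha, by simp⟩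
    · intro i hi
      simp [hi]
    · intro i j hi hj hij
      simpa using congrArg Fin.val hij
  have hk1 : k - 1 < k := by omega
  have hdir1 : ∑ i, μ i * σ i ≤ ∑ i, μ i * χ i := by
    apply Stmt18Aux.sum_threshold μ σ χ (μ (Fin.castLE (hn s) ⟨k-1, hk1⟩))
      (by rw [hsumσ, hsumχ])
    intro i
    by_cases hik : (i : ℕ) < k
    · have hχi : χ i = 1 := if_pos hik
      have hle : μ (Fin.castLE (hn s) ⟨k-1, hk1⟩) ≤ μ i := by
        apply hμ
        simp [Fin.le_def]
        omega
      rw [hχi]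
      apply mul_nonpos_of_nonneg_of_nonpos (by linarith) (by linarith [hσ1 i])
    · have hχi : χ i = 0 := if_neg hik
      have hle : μ i ≤ μ (Fin.castLE (hn s) ⟨k-1, hk1⟩) := by
        apply hμ
        simp [Fin.le_def]
        omega
      rw [hχi]
      apply mul_nonpos_of_nonpos_of_nonneg (by linarith) (by linarith [hσ0 i])
  have hSne : (univ.filter fun i : Fin (n s) => σ i ≠ 0).Nonempty := by
    by_contra h
    rw [Finset.not_nonempty_iff_eq_empty, Finset.filter_eq_empty_iff] at h
    have : ∑ i, σ i = 0 := Finset.sum_eq_zero fun i _ => by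
      have := h (Finset.mem_univ i); simpa using this
    rw [hsumσ] at this
    have : (1:ℝ) ≤ 0 := by
      calc (1:ℝ) ≤ (k:ℝ) := by exact_mod_cast hk
      _ = 0 := this
    linarith
  obtain ⟨i0, hi0mem, hi0min⟩ :=
    Finset.exists_min_image (univ.filter fun i : Fin (n s) => σ i ≠ 0) μ hSne
  have hσi0 : σ i0 ≠ 0 := by
    simpa using (Finset.mem_filter.mp hi0mem).2
  have hai0 : av i0 ≠ 0 := by
    intro h
    apply hσi0
    rw [hσ]
    simp only
    rw [h, zero_dotProduct]
  have hdir2 : ∑ i, μ i * χ i ≤ ∑ i, μ i * σ i := by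
    apply Stmt18Aux.sum_threshold μ χ σ (μ i0) (by rw [hsumσ, hsumχ])
    intro i
    by_cases hik : (i : ℕ) < k
    · have hχi : χ i = 1 := if_pos hik
      rcases eq_or_lt_of_le (hσ1 i) with h1 | h1
      · rw [hχi, h1]; simp
      · have hrne : rv i ≠ 0 := by
          intro h
          have h2 := hrr i
          rw [h, zero_dotProduct] at h2
          linarith
        have hmuc : μ i ≤ μ i0 := hcomp i i0 hrne hai0
        rw [hχi]
        apply mul_nonpos_of_nonpos_of_nonneg (by linarith) (by linarith)
    · have hχi : χ i = 0 := if_neg hik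
      rcases eq_or_ne (σ i) 0 with h1 | h1
      · rw [hχi, h1]; simp
      · have hge : μ i0 ≤ μ i := hi0min i (Finset.mem_filter.mpr ⟨Finset.mem_univ i, h1⟩)
        rw [hχi]
        apply mul_nonpos_of_nonneg_of_nonpos (by linarith) (by linarith [hσ0 i])
  have hμχ : ∑ i, μ i * χ i = ∑ i : Fin k, μ (Fin.castLE (hn s) i) := by
    rw [hχ]
    simp only [mul_ite, mul_one, mul_zero]
    rw [← Finset.sum_filter]
    have hfe : (univ.filter fun i : Fin (n s) => (i : ℕ) < k)
        = univ.map ⟨Fin.castLE (hn s), Fin.castLE_injective (hn s)⟩ := by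
      ext i
      simp only [Finset.mem_filter, Finset.mem_univ, true_and, Finset.mem_map,
        Function.Embedding.coeFn_mk]
      constructor
      · intro h
        exact ⟨⟨(i : ℕ), h⟩, rfl⟩
      · rintro ⟨j, rfl⟩
        simpa using j.isLt
    rw [hfe, Finset.sum_map]
    rfl
  calc trace (P0ᵀ * Es * P0) = ∑ i, μ i * σ i := htrM
  _ = ∑ i, μ i * χ i := le_antisymm hdir1 hdir2
  _ = ∑ i : Fin k, μ (Fin.castLE (hn s) i) := hμχ



end
end
end
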